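/- arXiv:1903.02255 — 7 statements merged into one kernel-verified Lean document; each statement's English description precedes it below -/
import Mathlib

section
/- For any i, j ∈ {0, 1, ..., n}, the Krawtchouk polynomials satisfy the orthogonality relation: Σ_{u=0}^{n} K_i^{(n,q)}(u) · K_j^{(n,q)}(u) · (q-1)^u · C(n,u) = δ_{i,j} · q^n · (q-1)^i · C(n,i), where δ_{i,j} is the Kronecker delta. -/
open Finset

/-- Generalized binomial coefficient `C(z, j) = z(z-1)⋯(z-j+1)/j!` for real `z`. -/
noncomputable def realChoose (z : ℝ) (j : ℕ) : ℝ :=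
  (∏ k ∈ Finset.range j, (z - k)) / (Nat.factorial j)

/-- The Krawtchouk polynomial `K_i^{(n,q)}(z)`. -/
noncomputable def kraw (n q i : ℕ) (z : ℝ) : ℝ :=
  ∑ j ∈ Finset.range (i + 1),
    (-1 : ℝ) ^ j * ((q : ℝ) - 1) ^ (i - j) * (q : ℝ) ^ j *
      ((n - j).choose (n - i) : ℝ) * realChoose z j

open Polynomial

lemma prod_desc (u j : ℕ) : ∏ k ∈ Finset.range j, ((u:ℝ) - k) = (u.descFactorial j : ℝ) := by
  induction j with
  | zero => simp
  | succ j ih =>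
    rw [Finset.prod_range_succ, ih, Nat.descFactorial_succ]
    rcases le_or_gt j u with h | h
    · push_cast [Nat.cast_sub h]; ring
    · rw [Nat.descFactorial_eq_zero_iff_lt.2 h]; simp

lemma realChoose_nat (u j : ℕ) : realChoose (u:ℝ) j = (u.choose j : ℝ) := by
  rw [realChoose, prod_desc, Nat.descFactorial_eq_factorial_mul_choose]
  push_cast
  rw [mul_comm, mul_div_assoc, div_self (Nat.cast_ne_zero.2 (Nat.factorial_ne_zero j)), mul_one]

lemma coeff_one_add_C_mul_X_pow {R : Type*} [CommRing R] (w : R) (m k : ℕ) :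
    ((1 + C w * X)^m).coeff k = (m.choose k : R) * w^k := by
  rw [add_comm (1:R[X]), add_pow, finset_sum_coeff]
  have h : ∀ l ∈ Finset.range (m+1), ((C w * X)^l * 1^(m-l) * ((m.choose l : ℕ) : R[X])).coeff k
      = if k = l then (m.choose l : R) * w^l else 0 := by
    intro l _
    have h2 : (C w * X)^l * 1^(m-l) * ((m.choose l : ℕ) : R[X]) = C ((m.choose l : R) * w^l) * X^l := by
      rw [← Polynomial.C_eq_natCast, mul_pow, ← C_pow, map_mul]; ring
    rw [h2, coeff_C_mul, coeff_X_pow]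
    split <;> simp
  rw [Finset.sum_congr rfl h, Finset.sum_ite_eq]
  by_cases hk : k ≤ m
  · simp [Finset.mem_range, Nat.lt_succ_iff, hk]
  · simp [Finset.mem_range, Nat.lt_succ_iff, hk, Nat.choose_eq_zero_of_lt (by omega : m < k)]

/-- key: kraw as coefficient of `(1+tX)^{n-u}(1-X)^u`. -/
lemma kraw_eq_coeff (n q u i : ℕ) (hu : u ≤ n) (hi : i ≤ n) :
    kraw n q i (u:ℝ) =
      (((1 + C ((q:ℝ)-1) * X)^(n-u) * (1 - X)^u : ℝ[X])).coeff i := by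
  set t : ℝ := (q:ℝ) - 1 with ht
  have hqt : (q:ℝ) = t + 1 := by rw [ht]; ring
  -- the common target
  set g : ℕ → ℝ := fun l =>
    (-1:ℝ)^l * (q:ℝ)^l * (u.choose l : ℝ) *
      (if l ≤ i then ((n-l).choose (i-l) : ℝ) * t^(i-l) else 0) with hg
  have hL : kraw n q i (u:ℝ) = ∑ l ∈ Finset.range (n+1), g l := by
    rw [kraw, ← Finset.sum_subset (Finset.range_subset_range.2 (by omega : i+1 ≤ n+1))
      (fun l _ hl => by
        have : ¬ l ≤ i := by simp [Finset.mem_range] at hl; omega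
        simp [hg, this])]
    apply Finset.sum_congr rfl
    intro l hl
    have hli : l ≤ i := by simp [Finset.mem_range] at hl; omega
    have hch : (n-l).choose (n-i) = (n-l).choose (i-l) := by
      rw [show i - l = (n-l) - (n-i) by omega]
      exact (Nat.choose_symm (by omega)).symm
    rw [realChoose_nat, hg]
    simp only [hli, if_true, hch]
    ring
  have hR : (((1 + C t * X)^(n-u) * (1 - X)^u : ℝ[X])).coeff i
      = ∑ l ∈ Finset.range (n+1), g l := by
    have hsplit : (1 - X : ℝ[X]) = (-(C (q:ℝ) * X)) + (1 + C t * X) := by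
      rw [hqt, map_add, map_one]; ring
    rw [hsplit, add_pow (-(C (q:ℝ) * X)) (1 + C t * X) u, Finset.mul_sum, finset_sum_coeff,
      ← Finset.sum_subset (Finset.range_subset_range.2 (by omega : u+1 ≤ n+1))
      (fun l _ hl => by
        have : u < l := by simp [Finset.mem_range] at hl; omega
        simp [hg, Nat.choose_eq_zero_of_lt this])]
    apply Finset.sum_congr rfl
    intro l hl
    have hlu : l ≤ u := by simp [Finset.mem_range] at hl; omega
    have hterm : (1 + C t * X)^(n-u) *
        ((-(C (q:ℝ) * X)) ^ l * (1 + C t * X) ^ (u - l) * ((u.choose l : ℕ) : ℝ[X]))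
        = C ((-1:ℝ)^l * (q:ℝ)^l * (u.choose l : ℝ)) * ((1 + C t * X)^(n-l) * X^l) := by
      have h1 : (1 + C t * X)^(n-u) * (1 + C t * X)^(u-l) = (1 + C t * X : ℝ[X])^(n-l) := by
        rw [← pow_add]; congr 1; omega
      calc (1 + C t * X)^(n-u) *
          ((-(C (q:ℝ) * X)) ^ l * (1 + C t * X) ^ (u - l) * ((u.choose l : ℕ) : ℝ[X]))
          = ((1 + C t * X)^(n-u) * (1 + C t * X)^(u-l)) *
            ((-(C (q:ℝ) * X)) ^ l * ((u.choose l : ℕ) : ℝ[X])) := by ring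
        _ = ((1 + C t * X)^(n-l)) *
            ((-(C (q:ℝ) * X)) ^ l * ((u.choose l : ℕ) : ℝ[X])) := by rw [h1]
        _ = _ := by
            rw [← Polynomial.C_eq_natCast, map_mul, map_mul, map_pow, map_pow, map_neg, map_one]
            ring
    rw [hterm, coeff_C_mul, coeff_mul_X_pow', hg]
    by_cases hli : l ≤ i
    · simp only [hli, if_true, coeff_one_add_C_mul_X_pow]
    · simp [hli]
  rw [hL, hR]

theorem krawtchouk_orthogonality (n q : ℕ) (hn : 1 ≤ n) (hq : 2 ≤ q)
    (i j : ℕ) (hi : i ≤ n) (hj : j ≤ n) :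
    ∑ u ∈ Finset.range (n + 1),
        kraw n q i u * kraw n q j u * ((q : ℝ) - 1) ^ u * (n.choose u : ℝ) =
      (if i = j then 1 else 0) * (q : ℝ) ^ n * ((q : ℝ) - 1) ^ i * (n.choose i : ℝ) := by
  set t : ℝ := (q:ℝ) - 1 with ht
  have hqt : (q:ℝ) = t + 1 := by rw [ht]; ring
  set P : ℕ → ℝ[X] := fun u => (1 + C t * X)^(n-u) * (1 - X)^u with hP
  set a : (ℝ[X])[X] := Polynomial.C ((1:ℝ[X]) + C t * X) * (1 + C (C t) * X) with ha
  set b : (ℝ[X])[X] := Polynomial.C (C t * (1 - X)) * (1 - X) with hb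
  have hba : b + a = C (C (q:ℝ)) * (1 + C (C t * X) * X) := by
    rw [ha, hb, hqt]
    simp only [map_add, map_mul, map_sub, map_one]
    ring
  have step1 : ∀ u ∈ Finset.range (n+1),
      ((b^u * a^(n-u) * ((n.choose u : ℕ) : (ℝ[X])[X])).coeff j).coeff i
      = (P u).coeff i * (P u).coeff j * t^u * (n.choose u : ℝ) := by
    intro u hu
    have hmap : (P u).map (C : ℝ →+* ℝ[X]) = (1 + C (C t) * X)^(n-u) * (1 - X)^u := by
      simp [hP, Polynomial.map_mul, Polynomial.map_pow, Polynomial.map_add,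
        Polynomial.map_sub, Polynomial.map_one, Polynomial.map_X, Polynomial.map_C]
    have hform : b^u * a^(n-u) * ((n.choose u : ℕ) : (ℝ[X])[X])
        = C (C ((n.choose u : ℝ) * t^u) * P u) * ((P u).map (C : ℝ →+* ℝ[X])) := by
      rw [hmap]
      simp only [ha, hb, hP, mul_pow, map_mul, map_pow, map_add, map_sub, map_one,
        ← Polynomial.C_eq_natCast]
      ring
    rw [hform, coeff_C_mul, Polynomial.coeff_map]
    have h2 : (C ((n.choose u : ℝ) * t^u) * P u) * C ((P u).coeff j)
        = C ((n.choose u : ℝ) * t^u * (P u).coeff j) * P u := by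
      simp only [map_mul]; ring
    rw [h2, coeff_C_mul]
    ring
  have hLHS : ∑ u ∈ Finset.range (n + 1),
        kraw n q i u * kraw n q j u * t ^ u * (n.choose u : ℝ)
      = (((b + a)^n).coeff j).coeff i := by
    rw [add_pow, finset_sum_coeff, finset_sum_coeff, Finset.sum_congr rfl step1]
    apply Finset.sum_congr rfl
    intro u hu
    have hun : u ≤ n := by simp [Finset.mem_range] at hu; omega
    rw [kraw_eq_coeff n q u i hun hi, kraw_eq_coeff n q u j hun hj]
  have hRHS : (((b + a)^n).coeff j).coeff i
      = (if i = j then 1 else 0) * (q:ℝ)^n * t^i * (n.choose i : ℝ) := by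
    rw [hba, mul_pow, ← map_pow, coeff_C_mul, coeff_one_add_C_mul_X_pow]
    have h3 : ((C (q:ℝ))^n * (((n.choose j : ℕ) : ℝ[X]) * (C t * X)^j))
        = C ((q:ℝ)^n * (n.choose j : ℝ) * t^j) * X^j := by
      rw [← Polynomial.C_eq_natCast, mul_pow, ← C_pow, ← C_pow, map_mul, map_mul]
      ring
    rw [h3, coeff_C_mul, coeff_X_pow]
    by_cases h : i = j
    · subst h; simp; ring
    · simp [h]
  rw [hLHS, hRHS]
end

section
/- The Christoffel-Darboux formula holds: for any i ∈ {0,1,...,n} and real z, w, we have (w - z)·T_i^{n,q}(z,w) = (i+1)/(q·(q-1)^i·C(n,i)) · [K_{i+1}^{(n,q)}(z)·K_i^{(n,q)}(w) - K_{i+1}^{(n,q)}(w)·K_i^{(n,q)}(z)]. -/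
open Finset

/-- The kernel `T_i^{n,q}(z,w)`. -/
noncomputable def krawKernel (n q i : ℕ) (z w : ℝ) : ℝ :=
  ∑ j ∈ Finset.range (i + 1),
    kraw n q j z * kraw n q j w / (((q : ℝ) - 1) ^ j * (n.choose j : ℝ))

noncomputable def kc (n q i j : ℕ) : ℝ :=
  (-1 : ℝ) ^ j * ((q : ℝ) - 1) ^ (i - j) * (q : ℝ) ^ j * ((n - j).choose (n - i) : ℝ)

lemma coeff_id (n q m j : ℕ) (hm1 : 1 ≤ m) (hmn : m ≤ n) (hj : j ≤ m) :
    ((m:ℝ)+1) * kc n q (m+1) j + (q:ℝ) * kc n q m (j-1) * (j:ℝ) + (q:ℝ) * kc n q m j * (j:ℝ)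
      + (((q:ℝ)-1) * (((n:ℝ)-(m:ℝ))+1)) * kc n q (m-1) j
    = ((((q:ℝ)-1) * ((n:ℝ)-(m:ℝ)) + (m:ℝ)) + (if m = n then ((n:ℝ)+1)*((q:ℝ)-1) else 0))
        * kc n q m j := by
  obtain ⟨e, rfl⟩ : ∃ e, m = j + e := ⟨m - j, by omega⟩
  obtain ⟨d, rfl⟩ : ∃ d, n = j + e + d := ⟨n - (j + e), by omega⟩
  have h1 : kc (j+e+d) q (j+e+1) j
      = (-1:ℝ)^j * ((q:ℝ)-1)^(e+1) * (q:ℝ)^j * (((e+d).choose (d-1) : ℕ) : ℝ) := by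
    unfold kc
    rw [show j+e+1-j = e+1 from by omega, show j+e+d-j = e+d from by omega,
      show j+e+d-(j+e+1) = d-1 from by omega]
  have h3 : kc (j+e+d) q (j+e) j
      = (-1:ℝ)^j * ((q:ℝ)-1)^e * (q:ℝ)^j * (((e+d).choose d : ℕ) : ℝ) := by
    unfold kc
    rw [show j+e-j = e from by omega, show j+e+d-j = e+d from by omega,
      show j+e+d-(j+e) = d from by omega]
  have h4 : kc (j+e+d) q (j+e-1) j
      = (-1:ℝ)^j * ((q:ℝ)-1)^(e-1) * (q:ℝ)^j * (((e+d).choose (d+1) : ℕ) : ℝ) := by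
    unfold kc
    rw [show j+e-1-j = e-1 from by omega, show j+e+d-j = e+d from by omega,
      show j+e+d-(j+e-1) = d+1 from by omega]
  have h2 : (q:ℝ) * kc (j+e+d) q (j+e) (j-1) * (j:ℝ)
      = (q:ℝ) * ((-1:ℝ)^(j-1) * ((q:ℝ)-1)^(e+1) * (q:ℝ)^(j-1)
          * (((e+d+1).choose d : ℕ) : ℝ)) * (j:ℝ) := by
    rcases j with _ | k
    · simp
    · have : kc (k+1+e+d) q (k+1+e) (k+1-1)
          = (-1:ℝ)^(k+1-1) * ((q:ℝ)-1)^(e+1) * (q:ℝ)^(k+1-1) * (((e+d+1).choose d : ℕ) : ℝ) := by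
        simp only [Nat.add_sub_cancel]
        unfold kc
        rw [show k+1+e-k = e+1 from by omega, show k+1+e+d-k = e+d+1 from by omega,
          show k+1+e+d-(k+1+e) = d from by omega]
      rw [this]
  rw [h1, h2, h3, h4]
  split_ifs with hd
  · -- d = 0
    obtain rfl : d = 0 := by omega
    simp only [Nat.add_zero, Nat.zero_add, zero_add, Nat.zero_sub, Nat.choose_zero_right,
      Nat.choose_one_right, Nat.choose_self, Nat.cast_one]
    rcases j with _ | k <;> rcases e with _ | e1
    · omega
    · -- j = 0, e = e1+1
      simp only [Nat.cast_zero, mul_zero, add_zero, Nat.add_sub_cancel, Nat.cast_add, Nat.cast_one]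
      push_cast
      ring
    · -- j = k+1, e = 0
      simp only [Nat.add_sub_cancel, Nat.zero_sub, pow_zero, Nat.cast_zero, Nat.cast_one]
      push_cast
      ring
    · -- j = k+1, e = e1+1
      simp only [Nat.add_sub_cancel]
      push_cast
      ring
  · -- d = d1+1
    obtain ⟨d1, rfl⟩ : ∃ d1, d = d1 + 1 := ⟨d - 1, by omega⟩
    simp only [Nat.add_sub_cancel]
    have hA' : (((e+(d1+1)).choose (d1+1) : ℕ) : ℝ) * ((d1:ℝ)+1)
        = (((e+(d1+1)).choose d1 : ℕ) : ℝ) * ((e:ℝ)+1) := by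
      have h := Nat.choose_succ_right_eq (e+(d1+1)) d1
      rw [show e+(d1+1)-d1 = e+1 from by omega] at h
      exact_mod_cast h
    have hB' : (((e+(d1+1)).choose (d1+1+1) : ℕ) : ℝ) * ((d1:ℝ)+1+1)
        = (((e+(d1+1)).choose (d1+1) : ℕ) : ℝ) * (e:ℝ) := by
      have h := Nat.choose_succ_right_eq (e+(d1+1)) (d1+1)
      rw [show e+(d1+1)-(d1+1) = e from by omega] at h
      exact_mod_cast h
    have hC' : (((e+(d1+1)+1).choose (d1+1) : ℕ) : ℝ)
        = (((e+(d1+1)).choose d1 : ℕ) : ℝ) + (((e+(d1+1)).choose (d1+1) : ℕ) : ℝ) := by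
      exact_mod_cast Nat.choose_succ_succ (e+(d1+1)) d1
    rcases j with _ | k <;> rcases e with _ | e1
    · omega
    · -- j = 0, e = e1+1
      simp only [Nat.cast_zero, mul_zero, add_zero, Nat.add_sub_cancel]
      push_cast
      push_cast at hA' hB'
      linear_combination (((q:ℝ)-1)^(e1+1)) * (-(((q:ℝ)-1))) * hA'
        + (((q:ℝ)-1)^(e1+1)) * hB'
    · -- j = k+1, e = 0
      simp only [Nat.add_sub_cancel, Nat.zero_sub, pow_zero, Nat.zero_add, zero_add] at hA' hB' hC' ⊢
      have hz4 : ((d1+1).choose (d1+1+1) : ℕ) = 0 :=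
        Nat.choose_eq_zero_of_lt (by omega)
      simp only [hz4, Nat.cast_zero] at hB' ⊢
      push_cast
      push_cast at hA' hB' hC'
      linear_combination ((-1:ℝ)^(k+1) * (q:ℝ)^(k+1)) * (-(((q:ℝ)-1))) * hA'
        + ((-1:ℝ)^(k+1) * (q:ℝ)^(k+1)) * hB'
        + ((-1:ℝ)^(k+1) * (q:ℝ)^(k+1)) * (-(((q:ℝ)-1) * ((k:ℝ)+1))) * hC'
    · -- j = k+1, e = e1+1
      simp only [Nat.add_sub_cancel]
      push_cast
      push_cast at hA' hB' hC'
      linear_combination ((-1:ℝ)^(k+1) * (q:ℝ)^(k+1) * ((q:ℝ)-1)^(e1+1)) * (-(((q:ℝ)-1))) * hA'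
        + ((-1:ℝ)^(k+1) * (q:ℝ)^(k+1) * ((q:ℝ)-1)^(e1+1)) * hB'
        + ((-1:ℝ)^(k+1) * (q:ℝ)^(k+1) * ((q:ℝ)-1)^(e1+1)) * (-(((q:ℝ)-1) * ((k:ℝ)+1))) * hC'

lemma kraw_eq (n q i : ℕ) (z : ℝ) :
    kraw n q i z = ∑ j ∈ Finset.range (i + 1), kc n q i j * realChoose z j := rfl

lemma realChoose_succ (z : ℝ) (j : ℕ) :
    ((j:ℝ)+1) * realChoose z (j+1) = (z - j) * realChoose z j := by
  have hf : ((Nat.factorial j : ℕ) : ℝ) ≠ 0 := by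
    exact_mod_cast (Nat.factorial_ne_zero j)
  have hj : ((j:ℝ)+1) ≠ 0 := by positivity
  simp only [realChoose, Finset.prod_range_succ, Nat.factorial_succ]
  push_cast
  field_simp

lemma z_mul_realChoose (z : ℝ) (j : ℕ) :
    z * realChoose z j = ((j:ℝ)+1) * realChoose z (j+1) + (j:ℝ) * realChoose z j := by
  rw [realChoose_succ]; ring

lemma shift_sum (g : ℕ → ℝ) (M : ℕ) (h0 : g 0 = 0) :
    ∑ j ∈ Finset.range (M+1), g (j+1) = (∑ j ∈ Finset.range (M+1), g j) + g (M+1) := by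
  have h1 := Finset.sum_range_succ' g (M+1)
  have h2 := Finset.sum_range_succ g (M+1)
  rw [h0, add_zero] at h1
  linarith [h1, h2]

lemma kraw_rec (n q m : ℕ) (hm1 : 1 ≤ m) (hmn : m ≤ n) (z : ℝ) :
    ((m:ℝ)+1) * kraw n q (m+1) z + (q:ℝ) * z * kraw n q m z
      + (((q:ℝ)-1) * (((n:ℝ)-(m:ℝ))+1)) * kraw n q (m-1) z
    = ((((q:ℝ)-1) * ((n:ℝ)-(m:ℝ)) + (m:ℝ)) + (if m = n then ((n:ℝ)+1)*((q:ℝ)-1) else 0))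
        * kraw n q m z := by
  have hS1 : ((m:ℝ)+1) * kraw n q (m+1) z
      = (∑ j ∈ Finset.range (m+1), ((m:ℝ)+1) * (kc n q (m+1) j * realChoose z j))
        + ((m:ℝ)+1) * (kc n q (m+1) (m+1) * realChoose z (m+1)) := by
    rw [kraw_eq, Finset.mul_sum, Finset.sum_range_succ]
  have hz : (q:ℝ) * z * kraw n q m z
      = (∑ j ∈ Finset.range (m+1), (q:ℝ) * kc n q m j * (((j:ℝ)+1) * realChoose z (j+1)))
        + ∑ j ∈ Finset.range (m+1), (q:ℝ) * kc n q m j * ((j:ℝ) * realChoose z j) := by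
    rw [kraw_eq, Finset.mul_sum, ← Finset.sum_add_distrib]
    exact Finset.sum_congr rfl fun j _ => by
      linear_combination ((q:ℝ) * kc n q m j) * z_mul_realChoose z j
  have hshift : (∑ j ∈ Finset.range (m+1), (q:ℝ) * kc n q m j * (((j:ℝ)+1) * realChoose z (j+1)))
      = (∑ j ∈ Finset.range (m+1), (q:ℝ) * kc n q m (j-1) * ((j:ℝ) * realChoose z j))
        + (q:ℝ) * kc n q m m * (((m:ℝ)+1) * realChoose z (m+1)) := by
    have h0 : (q:ℝ) * kc n q m (0-1) * (((0:ℕ):ℝ) * realChoose z 0) = 0 := by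
      simp
    have hs := shift_sum (fun j => (q:ℝ) * kc n q m (j-1) * ((j:ℝ) * realChoose z j)) m h0
    simp only [Nat.add_sub_cancel] at hs
    push_cast at hs
    calc (∑ j ∈ Finset.range (m+1), (q:ℝ) * kc n q m j * (((j:ℝ)+1) * realChoose z (j+1)))
        = ∑ j ∈ Finset.range (m+1), (q:ℝ) * kc n q m j * (((j:ℝ)+1) * realChoose z (j+1)) := rfl
      _ = (∑ j ∈ Finset.range (m+1), (q:ℝ) * kc n q m (j-1) * ((j:ℝ) * realChoose z j))
          + (q:ℝ) * kc n q m m * (((m:ℝ)+1) * realChoose z (m+1)) := hs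
  have htop : ((m:ℝ)+1) * (kc n q (m+1) (m+1) * realChoose z (m+1))
      + (q:ℝ) * kc n q m m * (((m:ℝ)+1) * realChoose z (m+1)) = 0 := by
    unfold kc
    simp only [Nat.sub_self, Nat.choose_self, pow_zero, Nat.cast_one]
    ring
  have hS4 : (((q:ℝ)-1) * (((n:ℝ)-(m:ℝ))+1)) * kraw n q (m-1) z
      = ∑ j ∈ Finset.range (m+1), (((q:ℝ)-1) * (((n:ℝ)-(m:ℝ))+1)) * (kc n q (m-1) j * realChoose z j) := by
    rw [kraw_eq, Finset.mul_sum, show m-1+1 = m from by omega, Finset.sum_range_succ]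
    have hzero : kc n q (m-1) m = 0 := by
      unfold kc
      rw [Nat.choose_eq_zero_of_lt (show n - m < n - (m-1) from by omega)]
      ring
    rw [hzero]
    ring
  have hRHS : ((((q:ℝ)-1) * ((n:ℝ)-(m:ℝ)) + (m:ℝ)) + (if m = n then ((n:ℝ)+1)*((q:ℝ)-1) else 0))
        * kraw n q m z
      = ∑ j ∈ Finset.range (m+1),
          ((((q:ℝ)-1) * ((n:ℝ)-(m:ℝ)) + (m:ℝ)) + (if m = n then ((n:ℝ)+1)*((q:ℝ)-1) else 0))
            * (kc n q m j * realChoose z j) := by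
    rw [kraw_eq, Finset.mul_sum]
  have hmain : (∑ j ∈ Finset.range (m+1), ((m:ℝ)+1) * (kc n q (m+1) j * realChoose z j))
      + (∑ j ∈ Finset.range (m+1), (q:ℝ) * kc n q m (j-1) * ((j:ℝ) * realChoose z j))
      + (∑ j ∈ Finset.range (m+1), (q:ℝ) * kc n q m j * ((j:ℝ) * realChoose z j))
      + (∑ j ∈ Finset.range (m+1), (((q:ℝ)-1) * (((n:ℝ)-(m:ℝ))+1)) * (kc n q (m-1) j * realChoose z j))
      = ∑ j ∈ Finset.range (m+1),
          ((((q:ℝ)-1) * ((n:ℝ)-(m:ℝ)) + (m:ℝ)) + (if m = n then ((n:ℝ)+1)*((q:ℝ)-1) else 0))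
            * (kc n q m j * realChoose z j) := by
    rw [← Finset.sum_add_distrib, ← Finset.sum_add_distrib, ← Finset.sum_add_distrib]
    refine Finset.sum_congr rfl fun j hjm => ?_
    have hj' : j ≤ m := by
      have := Finset.mem_range.mp hjm; omega
    linear_combination (realChoose z j) * coeff_id n q m j hm1 hmn hj'
  linarith [hS1, hz, hshift, htop, hS4, hRHS, hmain]

theorem krawtchouk_christoffel_darboux (n q : ℕ) (hn : 1 ≤ n) (hq : 2 ≤ q)
    (i : ℕ) (hi : i ≤ n) (z w : ℝ) :
    (w - z) * krawKernel n q i z w =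
      ((i : ℝ) + 1) / ((q : ℝ) * ((q : ℝ) - 1) ^ i * (n.choose i : ℝ)) *
        (kraw n q (i + 1) z * kraw n q i w - kraw n q (i + 1) w * kraw n q i z) := by
  have hq2 : (2:ℝ) ≤ (q:ℝ) := by exact_mod_cast hq
  have hq0 : (q:ℝ) ≠ 0 := by linarith
  have ht : ((q:ℝ)-1) ≠ 0 := by linarith
  induction i with
  | zero =>
    have hk0 : ∀ y : ℝ, kraw n q 0 y = 1 := by
      intro y; simp [kraw, realChoose]
    have hk1 : ∀ y : ℝ, kraw n q 1 y = ((q:ℝ)-1) * (n:ℝ) - (q:ℝ) * y := by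
      intro y
      have h01 : n.choose (n-1) = n := by rw [Nat.choose_symm hn, Nat.choose_one_right]
      simp [kraw, Finset.sum_range_succ, realChoose, h01]
      ring
    have hker0 : krawKernel n q 0 z w = 1 := by
      simp [krawKernel, hk0]
    rw [hker0, hk1 z, hk1 w, hk0 z, hk0 w]
    simp only [Nat.choose_zero_right, Nat.cast_zero, Nat.cast_one, pow_zero]
    field_simp
    ring
  | succ i ih =>
    have hi1 : i ≤ n := by omega
    have hCi : (n.choose i : ℝ) ≠ 0 := Nat.cast_ne_zero.mpr (Nat.choose_pos hi1).ne'
    have hCm : (n.choose (i+1) : ℝ) ≠ 0 := Nat.cast_ne_zero.mpr (Nat.choose_pos hi).ne'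
    have hrecz := kraw_rec n q (i+1) (by omega) hi z
    have hrecw := kraw_rec n q (i+1) (by omega) hi w
    simp only [Nat.add_sub_cancel] at hrecz hrecw
    obtain ⟨al, hz', hw'⟩ : ∃ al : ℝ,
        (((i+1:ℕ):ℝ)+1) * kraw n q (i+1+1) z + (q:ℝ) * z * kraw n q (i+1) z
          + (((q:ℝ)-1) * (((n:ℝ)-((i+1:ℕ):ℝ))+1)) * kraw n q i z = al * kraw n q (i+1) z
        ∧ (((i+1:ℕ):ℝ)+1) * kraw n q (i+1+1) w + (q:ℝ) * w * kraw n q (i+1) w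
          + (((q:ℝ)-1) * (((n:ℝ)-((i+1:ℕ):ℝ))+1)) * kraw n q i w = al * kraw n q (i+1) w :=
      ⟨_, hrecz, hrecw⟩
    push_cast at hz' hw'
    have key : ((i:ℝ)+2) * (kraw n q (i+1+1) z * kraw n q (i+1) w
          - kraw n q (i+1+1) w * kraw n q (i+1) z)
        = (q:ℝ)*(w-z)*(kraw n q (i+1) z * kraw n q (i+1) w)
          + ((q:ℝ)-1)*((n:ℝ)-(i:ℝ))*(kraw n q (i+1) z * kraw n q i w
              - kraw n q (i+1) w * kraw n q i z) := by
      linear_combination (kraw n q (i+1) w) * hz' - (kraw n q (i+1) z) * hw'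
    have Hc : ((n.choose (i+1) : ℕ):ℝ) * ((i:ℝ)+1) = ((n.choose i : ℕ):ℝ) * ((n:ℝ)-(i:ℝ)) := by
      have h := Nat.choose_succ_right_eq n i
      have h2 : ((n.choose (i+1) * (i+1) : ℕ):ℝ) = ((n.choose i * (n-i) : ℕ):ℝ) := by
        exact_mod_cast congrArg (Nat.cast : ℕ → ℝ) h
      push_cast [Nat.cast_sub hi1] at h2
      linarith [h2]
    have hker : krawKernel n q (i+1) z w
        = krawKernel n q i z w
          + kraw n q (i+1) z * kraw n q (i+1) w
              / (((q:ℝ)-1)^(i+1) * (n.choose (i+1) : ℝ)) :=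
      Finset.sum_range_succ _ _
    have hd1 : (q:ℝ)*((q:ℝ)-1)^i*(n.choose i : ℝ) ≠ 0 := by
      exact mul_ne_zero (mul_ne_zero hq0 (pow_ne_zero _ ht)) hCi
    have hd2 : ((q:ℝ)-1)^(i+1)*(n.choose (i+1) : ℝ) ≠ 0 :=
      mul_ne_zero (pow_ne_zero _ ht) hCm
    have hd3 : (q:ℝ)*((q:ℝ)-1)^(i+1)*(n.choose (i+1) : ℝ) ≠ 0 :=
      mul_ne_zero (mul_ne_zero hq0 (pow_ne_zero _ ht)) hCm
    have hDden : (q:ℝ)*((q:ℝ)-1)^(i+1)*(n.choose (i+1) : ℝ)*(n.choose i : ℝ) ≠ 0 :=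
      mul_ne_zero hd3 hCi
    rw [hker, mul_add, ih hi1]
    have e1 : ((i:ℝ)+1)/((q:ℝ)*((q:ℝ)-1)^i*(n.choose i : ℝ))
          * (kraw n q (i+1) z * kraw n q i w - kraw n q (i+1) w * kraw n q i z)
        = (((i:ℝ)+1)*((q:ℝ)-1)*(n.choose (i+1) : ℝ)
            * (kraw n q (i+1) z * kraw n q i w - kraw n q (i+1) w * kraw n q i z))
          / ((q:ℝ)*((q:ℝ)-1)^(i+1)*(n.choose (i+1) : ℝ)*(n.choose i : ℝ)) := by
      rw [div_mul_eq_mul_div, div_eq_div_iff hd1 hDden]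
      ring
    have e2 : (w-z) * (kraw n q (i+1) z * kraw n q (i+1) w
            / (((q:ℝ)-1)^(i+1) * (n.choose (i+1) : ℝ)))
        = ((q:ℝ)*(n.choose i : ℝ)*((w-z)*(kraw n q (i+1) z * kraw n q (i+1) w)))
          / ((q:ℝ)*((q:ℝ)-1)^(i+1)*(n.choose (i+1) : ℝ)*(n.choose i : ℝ)) := by
      rw [eq_div_iff hDden]
      field_simp
    have e3 : (((i+1:ℕ):ℝ)+1)/((q:ℝ)*((q:ℝ)-1)^(i+1)*(n.choose (i+1) : ℝ))
          * (kraw n q (i+1+1) z * kraw n q (i+1) w - kraw n q (i+1+1) w * kraw n q (i+1) z)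
        = ((((i:ℝ)+2)*(n.choose i : ℝ)
            * (kraw n q (i+1+1) z * kraw n q (i+1) w - kraw n q (i+1+1) w * kraw n q (i+1) z)))
          / ((q:ℝ)*((q:ℝ)-1)^(i+1)*(n.choose (i+1) : ℝ)*(n.choose i : ℝ)) := by
      rw [div_mul_eq_mul_div, div_eq_div_iff hd3 hDden]
      push_cast
      ring
    rw [e1, e2, e3, ← add_div]
    congr 1
    linear_combination (((q:ℝ)-1) * (kraw n q (i+1) z * kraw n q i w
        - kraw n q (i+1) w * kraw n q i z)) * Hc - (n.choose i : ℝ) * key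
end

section
/- For any code C ⊆ F_q^n with distance distribution (B_0, ..., B_n), the dual distance distribution components B'_i = (1/|C|) · Σ_{j=0}^{n} B_j · K_i^{(n,q)}(j) satisfy B'_i ≥ 0 for all i = 0, 1, ..., n. -/
open Finset

/-- The distance distribution `B_i` of a code `C ⊆ F_q^n`. -/
noncomputable def distDistrib {n q : ℕ} (C : Finset (Fin n → Fin q)) (i : ℕ) : ℝ :=
  (((C ×ˢ C).filter (fun p => hammingDist p.1 p.2 = i)).card : ℝ) / (C.card : ℝ)

/-- The dual distance distribution (MacWilliams transform) `B'_i` of a code. -/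
noncomputable def dualDistDistrib {n q : ℕ} (C : Finset (Fin n → Fin q)) (i : ℕ) : ℝ :=
  (∑ j ∈ Finset.range (n + 1), distDistrib C j * kraw n q i j) / (C.card : ℝ)

/-! ### Auxiliary material -/

open Polynomial

/-- The second (alternating) form of the Krawtchouk polynomial at integer points. -/
noncomputable def K2 (n q d i : ℕ) : ℝ :=
  ∑ j ∈ Finset.range (i + 1),
    (-1 : ℝ) ^ j * ((q : ℝ) - 1) ^ (i - j) * (d.choose j : ℝ) * ((n - d).choose (i - j) : ℝ)

lemma realChoose_nat_s5 (d j : ℕ) : realChoose (d : ℝ) j = (d.choose j : ℝ) := by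
  rcases le_or_gt j d with h | h
  · have hp : (∏ k ∈ Finset.range j, ((d : ℝ) - k)) = (d.descFactorial j : ℝ) := by
      rw [Nat.descFactorial_eq_prod_range, Nat.cast_prod]
      refine Finset.prod_congr rfl fun k hk => ?_
      rw [Finset.mem_range] at hk
      rw [Nat.cast_sub (le_trans (Nat.le_of_lt_succ (Nat.lt_succ_of_lt hk)) h)]
    rw [realChoose, hp, Nat.descFactorial_eq_factorial_mul_choose]
    push_cast
    rw [mul_comm, mul_div_assoc, div_self (by positivity), mul_one]
  · rw [realChoose, Finset.prod_eq_zero (Finset.mem_range.2 h) (by simp),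
      Nat.choose_eq_zero_of_lt h]
    simp

lemma binom_expand {R : Type*} [CommRing R] (a : R) (m : ℕ) :
    (1 + C a * X : R[X]) ^ m = ∑ k ∈ range (m + 1), C ((m.choose k : R) * a ^ k) * X ^ k := by
  rw [add_comm, add_pow]
  refine Finset.sum_congr rfl fun k _ => ?_
  simp only [one_pow, mul_one, mul_pow, ← C_pow]
  rw [← Polynomial.C_eq_natCast, mul_right_comm, ← C_mul, mul_comm (a ^ k)]

lemma coeff_binom {R : Type*} [CommRing R] (a : R) (m i : ℕ) :
    ((1 + C a * X : R[X]) ^ m).coeff i = (m.choose i : R) * a ^ i := by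
  rw [binom_expand, Polynomial.finset_sum_coeff]
  simp only [Polynomial.coeff_C_mul_X_pow]
  rw [Finset.sum_ite_eq (range (m+1)) i]
  rcases le_or_gt i m with h | h
  · rw [if_pos (Finset.mem_range.2 (Nat.lt_succ_of_le h))]
  · rw [if_neg (by simp [Nat.lt_succ, h.not_ge]), Nat.choose_eq_zero_of_lt h, Nat.cast_zero,
      zero_mul]

lemma coeff_prod_binom {R : Type*} [CommRing R] (a b : R) (m d i : ℕ) :
    (((1 + C a * X) ^ m * (1 + C b * X) ^ d : R[X])).coeff i
      = ∑ j ∈ range (i + 1),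
          ((d.choose j : R) * b ^ j) * ((m.choose (i - j) : R) * a ^ (i - j)) := by
  rw [mul_comm, Polynomial.coeff_mul, Finset.Nat.sum_antidiagonal_eq_sum_range_succ_mk]
  refine Finset.sum_congr rfl fun j _ => ?_
  rw [coeff_binom, coeff_binom]

lemma coeff_prod_binom2 {R : Type*} [CommRing R] (a q' : R) (n d i : ℕ) (hd : d ≤ n) :
    (((1 + C a * X) ^ (n - d) * (1 + C (a - q') * X) ^ d : R[X])).coeff i
      = ∑ j ∈ range (d + 1), (d.choose j : R) * (-q') ^ j *
          (if j ≤ i then ((n - j).choose (i - j) : R) * a ^ (i - j) else 0) := by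
  have h1 : ((1 + C (a - q') * X : R[X])) ^ d
      = ∑ j ∈ range (d + 1), (C (-q') * X) ^ j * (1 + C a * X) ^ (d - j) * (d.choose j : R[X]) := by
    rw [← add_pow]
    congr 1
    rw [C_sub, sub_mul, C_neg]; ring
  rw [h1, Finset.mul_sum, Polynomial.finset_sum_coeff]
  refine Finset.sum_congr rfl fun j hj => ?_
  rw [Finset.mem_range, Nat.lt_succ] at hj
  have h2 : ((1 + C a * X : R[X]) ^ (n - d))
      * ((C (-q') * X) ^ j * (1 + C a * X) ^ (d - j) * (d.choose j : R[X]))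
      = C ((d.choose j : R) * (-q') ^ j) * ((1 + C a * X) ^ (n - j) * X ^ j) := by
    rw [mul_pow, ← C_pow, ← Polynomial.C_eq_natCast, C_mul,
      show n - j = (d - j) + (n - d) by omega, pow_add]
    ring
  rw [h2, Polynomial.coeff_C_mul, Polynomial.coeff_mul_X_pow', coeff_binom]

lemma kraw_eq_K2 (n q d i : ℕ) (hd : d ≤ n) (hi : i ≤ n) :
    kraw n q i (d : ℝ) = K2 n q d i := by
  have hb : ((q : ℝ) - 1) - (q : ℝ) = -1 := by ring
  calc kraw n q i (d : ℝ)
      = ∑ j ∈ range (n + 1), (-1 : ℝ) ^ j * ((q : ℝ) - 1) ^ (i - j) * (q : ℝ) ^ j *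
          ((n - j).choose (n - i) : ℝ) * realChoose (d : ℝ) j := by
        refine Finset.sum_subset (Finset.range_subset_range.2 (by omega)) fun j hj hj' => ?_
        rw [Finset.mem_range, Nat.lt_succ] at hj hj'
        rw [Nat.choose_eq_zero_of_lt (show n - j < n - i by omega), Nat.cast_zero]
        ring
    _ = ∑ j ∈ range (n + 1), ((d.choose j : ℝ) * (-(q:ℝ)) ^ j *
          (if j ≤ i then ((n - j).choose (i - j) : ℝ) * ((q : ℝ) - 1) ^ (i - j) else 0)) := by
        refine Finset.sum_congr rfl fun j hj => ?_
        rw [Finset.mem_range, Nat.lt_succ] at hj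
        rcases le_or_gt j i with hji | hji
        · have h1 : n - i ≤ n - j := by omega
          have h2 : (n - j).choose (n - i) = (n - j).choose (i - j) := by
            rw [← Nat.choose_symm h1, show n - j - (n - i) = i - j by omega]
          rw [realChoose_nat_s5, h2, if_pos hji, neg_pow]
          ring
        · rw [if_neg hji.not_ge,
            Nat.choose_eq_zero_of_lt (show n - j < n - i by omega), Nat.cast_zero]
          ring
    _ = ∑ j ∈ range (d + 1), ((d.choose j : ℝ) * (-(q:ℝ)) ^ j *
          (if j ≤ i then ((n - j).choose (i - j) : ℝ) * ((q : ℝ) - 1) ^ (i - j) else 0)) := by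
        refine (Finset.sum_subset (Finset.range_subset_range.2 (by omega)) fun j hj hj' => ?_).symm
        rw [Finset.mem_range, Nat.lt_succ] at hj hj'
        rw [Nat.choose_eq_zero_of_lt (show d < j by omega), Nat.cast_zero]
        ring
    _ = (((1 + C ((q : ℝ) - 1) * X) ^ (n - d)
          * (1 + C (((q : ℝ) - 1) - (q : ℝ)) * X) ^ d : Polynomial ℝ)).coeff i := by
        rw [coeff_prod_binom2 _ _ n d i hd]
    _ = ∑ j ∈ range (i + 1),
          ((d.choose j : ℝ) * (((q : ℝ) - 1) - (q : ℝ)) ^ j) *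
            (((n - d).choose (i - j) : ℝ) * ((q : ℝ) - 1) ^ (i - j)) := coeff_prod_binom _ _ _ _ _
    _ = K2 n q d i := by
        rw [K2]
        refine Finset.sum_congr rfl fun j hj => ?_
        rw [hb]
        ring

noncomputable def zz (q : ℕ) : ℂ := Complex.exp (2 * Real.pi * Complex.I / q)

noncomputable def ee (q : ℕ) (m : ℤ) : ℂ := zz q ^ m

lemma zz_ne_zero (q : ℕ) : zz q ≠ 0 := Complex.exp_ne_zero _

lemma ee_eq_exp (q : ℕ) (m : ℤ) : ee q m = Complex.exp (m * (2 * Real.pi * Complex.I / q)) := by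
  rw [ee, zz, ← Complex.exp_int_mul]

lemma ee_zero (q : ℕ) : ee q 0 = 1 := by simp [ee]

lemma ee_add (q : ℕ) (m₁ m₂ : ℤ) : ee q (m₁ + m₂) = ee q m₁ * ee q m₂ :=
  zpow_add₀ (zz_ne_zero q) m₁ m₂

lemma ee_mul_nat (q : ℕ) (c : ℤ) (a : ℕ) : ee q ((a : ℤ) * c) = (ee q c) ^ a := by
  rw [ee, ee, mul_comm, zpow_mul, zpow_natCast]

lemma ee_pow_q (q : ℕ) (hq : q ≠ 0) (c : ℤ) : (ee q c) ^ q = 1 := by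
  have h := ee_mul_nat q c q
  rw [← h, ee_eq_exp]
  have hq' : (q : ℂ) ≠ 0 := Nat.cast_ne_zero.2 hq
  have h2 : ((q * c : ℤ) : ℂ) * (2 * Real.pi * Complex.I / q) = c * (2 * Real.pi * Complex.I) := by
    push_cast
    field_simp
  rw [h2, Complex.exp_int_mul_two_pi_mul_I]

lemma ee_ne_one (q : ℕ) (hq : 2 ≤ q) (c : ℤ) (hc : c ≠ 0) (hlt : |c| < q) : ee q c ≠ 1 := by
  rw [ee_eq_exp]
  intro h
  rw [Complex.exp_eq_one_iff] at h
  obtain ⟨m, hm⟩ := h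
  have hq' : (q : ℂ) ≠ 0 := Nat.cast_ne_zero.2 (by omega)
  have h2pi : (2 * (Real.pi : ℂ) * Complex.I) ≠ 0 := by
    simp [Real.pi_ne_zero, Complex.I_ne_zero]
  have hcm : (c : ℂ) = m * q := by
    field_simp at hm
    have hm' : (c : ℂ) * (2 * Real.pi * Complex.I) = ((m : ℂ) * q) * (2 * Real.pi * Complex.I) := by
      rw [hm]; ring
    exact mul_right_cancel₀ h2pi hm'
  have : c = m * q := by exact_mod_cast hcm
  have : (q : ℤ) ∣ c := ⟨m, by rw [this]; ring⟩
  rcases this with ⟨k, hk⟩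
  rw [hk] at hlt hc
  rcases Int.lt_iff_add_one_le.1 (abs_lt.1 hlt).2 with h
  have hk0 : k = 0 := by
    rcases lt_trichotomy k 0 with h1 | h1 | h1
    · nlinarith [abs_lt.1 hlt, (show (1:ℤ) ≤ -k by omega)]
    · exact h1
    · nlinarith [abs_lt.1 hlt, (show (1:ℤ) ≤ k by omega)]
  simp [hk0] at hc

lemma sum_char (q : ℕ) (hq : 2 ≤ q) (u v : Fin q) :
    ∑ a : Fin q, ee q ((a : ℤ) * ((u : ℤ) - (v : ℤ))) = if u = v then (q : ℂ) else 0 := by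
  have hrw : ∀ a : Fin q, ee q ((a : ℤ) * ((u : ℤ) - (v : ℤ)))
      = (ee q ((u : ℤ) - (v : ℤ))) ^ (a : ℕ) := fun a => ee_mul_nat q _ a
  simp only [hrw]
  rw [Fin.sum_univ_eq_sum_range (fun k => (ee q ((u : ℤ) - (v : ℤ))) ^ k)]
  by_cases huv : u = v
  · subst huv
    simp [ee_zero]
  · rw [if_neg huv]
    have hc : ((u : ℤ) - (v : ℤ)) ≠ 0 := by
      simp only [sub_ne_zero]
      exact_mod_cast fun h => huv (Fin.ext (by exact_mod_cast h))
    have hlt : |(u : ℤ) - (v : ℤ)| < q := by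
      have h1 := u.isLt; have h2 := v.isLt
      rw [abs_lt]; omega
    rw [geom_sum_eq (ee_ne_one q hq _ hc hlt) q, ee_pow_q q (by omega) _]
    simp

lemma sum_char_erase (q : ℕ) [NeZero q] (hq : 2 ≤ q) (u v : Fin q) :
    ∑ a ∈ univ.erase (0 : Fin q), ee q ((a : ℤ) * ((u : ℤ) - (v : ℤ)))
      = if u = v then (q : ℂ) - 1 else -1 := by
  have h := sum_char q hq u v
  rw [← Finset.add_sum_erase _ _ (Finset.mem_univ (0 : Fin q))] at h
  have h0 : ee q (((0 : Fin q) : ℤ) * ((u : ℤ) - (v : ℤ))) = 1 := by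
    simp [ee_zero]
  rw [h0] at h
  split at h
  · rw [if_pos ‹u = v›, eq_sub_iff_add_eq, add_comm]; exact h
  · rw [if_neg ‹¬ u = v›]; linear_combination h

lemma char_sum_eq (n q : ℕ) [NeZero q] (hq : 2 ≤ q) (i : ℕ) (x y : Fin n → Fin q) :
    ∑ z ∈ univ.filter (fun z : Fin n → Fin q => (∑ k, if z k = 0 then 0 else 1) = i),
        ∏ k, ee q ((z k : ℤ) * ((x k : ℤ) - (y k : ℤ)))
      = ((K2 n q (hammingDist x y) i : ℝ) : ℂ) := by
  have key : ∀ k : Fin n, (∑ a : Fin q, C (ee q ((a : ℤ) * ((x k : ℤ) - (y k : ℤ))))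
        * X ^ (if a = 0 then 0 else 1))
      = 1 + C (if x k = y k then (q : ℂ) - 1 else -1) * X := by
    intro k
    rw [← Finset.add_sum_erase _ _ (Finset.mem_univ (0 : Fin q))]
    have h0 : C (ee q (((0 : Fin q) : ℤ) * ((x k : ℤ) - (y k : ℤ))))
        * X ^ (if (0 : Fin q) = 0 then 0 else 1) = 1 := by
      simp [ee_zero]
    rw [h0]
    congr 1
    rw [Finset.sum_congr rfl (fun a ha => ?_), ← Finset.sum_mul,
      ← map_sum (Polynomial.C : ℂ →+* Polynomial ℂ)
        (fun a : Fin q => ee q ((a : ℤ) * ((x k : ℤ) - (y k : ℤ)))) (univ.erase 0),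
      sum_char_erase q hq (x k) (y k)]
    rw [if_neg (Finset.mem_erase.1 ha).1, pow_one]
  have h1 : (∏ k : Fin n, ∑ a : Fin q, C (ee q ((a : ℤ) * ((x k : ℤ) - (y k : ℤ))))
        * X ^ (if a = 0 then 0 else 1))
      = ∑ z ∈ (univ : Finset (Fin n → Fin q)),
          C (∏ k, ee q ((z k : ℤ) * ((x k : ℤ) - (y k : ℤ))))
            * X ^ (∑ k, if z k = 0 then 0 else 1) := by
    rw [Finset.prod_univ_sum, Fintype.piFinset_univ]
    refine Finset.sum_congr rfl fun z _ => ?_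
    rw [Finset.prod_mul_distrib, map_prod, Finset.prod_pow_eq_pow_sum]
  have h2 : (∑ z ∈ (univ : Finset (Fin n → Fin q)),
          C (∏ k, ee q ((z k : ℤ) * ((x k : ℤ) - (y k : ℤ))))
            * X ^ (∑ k, if z k = 0 then 0 else 1)).coeff i
      = ∑ z ∈ univ.filter (fun z : Fin n → Fin q => (∑ k, if z k = 0 then 0 else 1) = i),
        ∏ k, ee q ((z k : ℤ) * ((x k : ℤ) - (y k : ℤ))) := by
    rw [Polynomial.finset_sum_coeff]
    simp only [Polynomial.coeff_C_mul_X_pow]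
    rw [Finset.sum_filter]
    refine Finset.sum_congr rfl fun z _ => ?_
    simp only [eq_comm]
  have hcard : (univ.filter (fun k : Fin n => ¬ x k = y k)).card = hammingDist x y := rfl
  have hcard2 : (univ.filter (fun k : Fin n => x k = y k)).card = n - hammingDist x y := by
    have := Finset.card_filter_add_card_filter_not (s := (univ : Finset (Fin n)))
      (fun k => x k = y k)
    simp only [Finset.card_univ, Fintype.card_fin] at this
    omega
  have h3 : (∏ k : Fin n, ∑ a : Fin q, C (ee q ((a : ℤ) * ((x k : ℤ) - (y k : ℤ))))
        * X ^ (if a = 0 then 0 else 1))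
      = (1 + C ((q : ℂ) - 1) * X) ^ (n - hammingDist x y)
        * (1 + C (-1 : ℂ) * X) ^ (hammingDist x y) := by
    rw [Finset.prod_congr rfl (fun k _ => key k)]
    rw [← Finset.prod_filter_mul_prod_filter_not univ (fun k => x k = y k)]
    rw [Finset.prod_congr rfl (fun k hk => by rw [if_pos (Finset.mem_filter.1 hk).2]),
      Finset.prod_const, hcard2]
    rw [Finset.prod_congr rfl (fun k hk => by rw [if_neg (Finset.mem_filter.1 hk).2]),
      Finset.prod_const, hcard]
  rw [← h2, ← h1, h3, coeff_prod_binom]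
  rw [K2]
  push_cast
  refine Finset.sum_congr rfl fun j _ => ?_
  ring

lemma ee_neg (q : ℕ) (m : ℤ) : ee q (-m) = (starRingEnd ℂ) (ee q m) := by
  rw [ee, ee, map_zpow₀ (starRingEnd ℂ)]
  have : (starRingEnd ℂ) (zz q) = (zz q)⁻¹ := by
    rw [zz, ← Complex.exp_conj, ← Complex.exp_neg]
    congr 1
    simp [Complex.ext_iff, div_eq_mul_inv]
  rw [this, inv_zpow, ← zpow_neg]

lemma prod_split (n q : ℕ) (z x y : Fin n → Fin q) :
    (∏ k, ee q ((z k : ℤ) * ((x k : ℤ) - (y k : ℤ))))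
      = (∏ k, ee q ((z k : ℤ) * (x k : ℤ)))
        * (starRingEnd ℂ) (∏ k, ee q ((z k : ℤ) * (y k : ℤ))) := by
  rw [map_prod, ← Finset.prod_mul_distrib]
  refine Finset.prod_congr rfl fun k _ => ?_
  rw [← ee_neg, ← ee_add]
  congr 1
  ring

lemma pair_sum_nonneg (n q : ℕ) [NeZero q] (hq : 2 ≤ q) (i : ℕ)
    (B : Finset (Fin n → Fin q)) :
    0 ≤ ∑ p ∈ B ×ˢ B, K2 n q (hammingDist p.1 p.2) i := by
  have hC : ((∑ p ∈ B ×ˢ B, K2 n q (hammingDist p.1 p.2) i : ℝ) : ℂ)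
      = ∑ z ∈ univ.filter (fun z : Fin n → Fin q => (∑ k, if z k = 0 then 0 else 1) = i),
          (Complex.normSq (∑ x ∈ B, ∏ k, ee q ((z k : ℤ) * (x k : ℤ))) : ℂ) := by
    rw [Complex.ofReal_sum]
    calc ∑ p ∈ B ×ˢ B, ((K2 n q (hammingDist p.1 p.2) i : ℝ) : ℂ)
        = ∑ p ∈ B ×ˢ B, ∑ z ∈ univ.filter
              (fun z : Fin n → Fin q => (∑ k, if z k = 0 then 0 else 1) = i),
            ∏ k, ee q ((z k : ℤ) * ((p.1 k : ℤ) - (p.2 k : ℤ))) :=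
          Finset.sum_congr rfl fun p _ => (char_sum_eq n q hq i p.1 p.2).symm
      _ = ∑ z ∈ univ.filter
              (fun z : Fin n → Fin q => (∑ k, if z k = 0 then 0 else 1) = i),
            ∑ p ∈ B ×ˢ B, ∏ k, ee q ((z k : ℤ) * ((p.1 k : ℤ) - (p.2 k : ℤ))) :=
          Finset.sum_comm
      _ = _ := by
          refine Finset.sum_congr rfl fun z _ => ?_
          rw [Finset.sum_product]
          calc ∑ x ∈ B, ∑ y ∈ B, ∏ k, ee q ((z k : ℤ) * ((x k : ℤ) - (y k : ℤ)))
              = ∑ x ∈ B, ∑ y ∈ B, (∏ k, ee q ((z k : ℤ) * (x k : ℤ)))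
                  * (starRingEnd ℂ) (∏ k, ee q ((z k : ℤ) * (y k : ℤ))) :=
                Finset.sum_congr rfl fun a _ => Finset.sum_congr rfl fun b _ =>
                  prod_split n q z a b
            _ = (∑ x ∈ B, ∏ k, ee q ((z k : ℤ) * (x k : ℤ)))
                  * (starRingEnd ℂ) (∑ x ∈ B, ∏ k, ee q ((z k : ℤ) * (x k : ℤ))) := by
                rw [map_sum, Finset.sum_mul_sum]
            _ = _ := Complex.mul_conj _
  have hre := congrArg Complex.re hC
  rw [Complex.ofReal_re, Complex.re_sum] at hre
  rw [hre]
  refine Finset.sum_nonneg fun z _ => ?_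
  rw [Complex.ofReal_re]
  exact Complex.normSq_nonneg _

theorem dualDistDistrib_nonneg (n q : ℕ) (hn : 1 ≤ n) (hq : 2 ≤ q)
    (C : Finset (Fin n → Fin q)) (hC : C.Nonempty) :
    ∀ i : ℕ, i ≤ n → 0 ≤ dualDistDistrib C i := by
  intro i hi
  haveI : NeZero q := ⟨by omega⟩
  rw [dualDistDistrib]
  have hcard : (0:ℝ) ≤ (C.card : ℝ) := Nat.cast_nonneg _
  refine div_nonneg ?_ hcard
  have hS : ∑ j ∈ Finset.range (n + 1), distDistrib C j * kraw n q i j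
      = (∑ p ∈ C ×ˢ C, K2 n q (hammingDist p.1 p.2) i) / (C.card : ℝ) := by
    calc ∑ j ∈ Finset.range (n + 1), distDistrib C j * kraw n q i j
        = ∑ j ∈ Finset.range (n + 1),
            ((((C ×ˢ C).filter (fun p => hammingDist p.1 p.2 = j)).card : ℝ)
              * K2 n q j i) / (C.card : ℝ) := by
          refine Finset.sum_congr rfl fun j hj => ?_
          rw [Finset.mem_range, Nat.lt_succ] at hj
          rw [distDistrib, kraw_eq_K2 n q j i hj hi, div_mul_eq_mul_div]
      _ = (∑ j ∈ Finset.range (n + 1),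
            (((C ×ˢ C).filter (fun p => hammingDist p.1 p.2 = j)).card : ℝ)
              * K2 n q j i) / (C.card : ℝ) := by
          rw [Finset.sum_div]
      _ = (∑ p ∈ C ×ˢ C, K2 n q (hammingDist p.1 p.2) i) / (C.card : ℝ) := by
          congr 1
          rw [← Finset.sum_fiberwise_of_maps_to
            (g := fun p : (Fin n → Fin q) × (Fin n → Fin q) => hammingDist p.1 p.2)
            (t := Finset.range (n + 1))
            (fun p _ => Finset.mem_range.2 (Nat.lt_succ_of_le
              (le_trans hammingDist_le_card_fintype (le_of_eq (Fintype.card_fin n)))))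
            (fun p => K2 n q (hammingDist p.1 p.2) i)]
          refine Finset.sum_congr rfl fun j hj => ?_
          rw [Finset.sum_congr rfl (fun p hp => by rw [(Finset.mem_filter.1 hp).2]),
            Finset.sum_const, nsmul_eq_mul]
  rw [hS]
  exact div_nonneg (pair_sum_nonneg n q hq i C) hcard
end

section
/- Linear Programming Bound for codes: if a real polynomial f(z) = Σ_{i=0}^{n} f_i K_i^{(n,q)}(z) satisfies f_0 > 0, f_i ≥ 0 for i = 1,...,n, f(0) > 0, and f(i) ≤ 0 for i = d, d+1, ..., n, then every code C ⊆ F_q^n with minimum distance at least d satisfies |C| ≤ f(0)/f_0. -/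
open Finset

lemma realChoose_nat_s7 (w j : ℕ) : realChoose (w : ℝ) j = (w.choose j : ℝ) := by
  rcases le_or_gt j w with h | h
  · have hp : (∏ k ∈ Finset.range j, ((w : ℝ) - k)) = ((w.descFactorial j : ℕ) : ℝ) := by
      rw [Nat.descFactorial_eq_prod_range, Nat.cast_prod]
      refine Finset.prod_congr rfl fun k hk => ?_
      rw [Nat.cast_sub (le_of_lt (lt_of_lt_of_le (Finset.mem_range.mp hk) h))]
    rw [realChoose, hp, Nat.descFactorial_eq_factorial_mul_choose]
    push_cast
    rw [mul_comm]
    rw [mul_div_assoc, div_self (by positivity), mul_one]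
  · have hzero : (∏ k ∈ Finset.range j, ((w : ℝ) - k)) = 0 :=
      Finset.prod_eq_zero (Finset.mem_range.mpr h) (by simp)
    rw [realChoose, hzero, Nat.choose_eq_zero_of_lt h]
    simp

lemma kraw_zero (n q : ℕ) (z : ℝ) : kraw n q 0 z = 1 := by
  simp [kraw, realChoose]

open Polynomial in
lemma kraw_coeff (n q i w : ℕ) (hi : i ≤ n) (hw : w ≤ n) :
    ((X + C ((q : ℂ) - 1)) ^ (n - w) * (X + C (-1 : ℂ)) ^ w).coeff (n - i)
      = ((kraw n q i (w : ℝ) : ℝ) : ℂ) := by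
  have hXC : (X + C (-1 : ℂ)) = (X + C ((q : ℂ) - 1)) - C (q : ℂ) := by
    rw [add_sub_assoc, ← C_sub]
    norm_num
  rw [hXC, sub_pow, Finset.mul_sum]
  -- compute each coefficient
  have hterm : ∀ m ∈ Finset.range (w + 1),
      ((X + C ((q : ℂ) - 1)) ^ (n - w) *
        ((-1 : ℂ[X]) ^ (m + w) * (X + C ((q : ℂ) - 1)) ^ m * (C (q : ℂ)) ^ (w - m)
          * (w.choose m : ℂ[X]))).coeff (n - i)
      = (-1 : ℂ) ^ (m + w) * (q : ℂ) ^ (w - m) * (w.choose m : ℂ)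
          * (((q : ℂ) - 1) ^ ((n - w + m) - (n - i)) * ((n - w + m).choose (n - i) : ℂ)) := by
    intro m hm
    have h1 : (X + C ((q : ℂ) - 1)) ^ (n - w) *
        ((-1 : ℂ[X]) ^ (m + w) * (X + C ((q : ℂ) - 1)) ^ m * (C (q : ℂ)) ^ (w - m)
          * (w.choose m : ℂ[X]))
        = C ((-1 : ℂ) ^ (m + w) * (q : ℂ) ^ (w - m) * (w.choose m : ℂ))
            * (X + C ((q : ℂ) - 1)) ^ (n - w + m) := by
      have e1 : (-1 : ℂ[X]) ^ (m + w) = C ((-1 : ℂ) ^ (m + w)) := by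
        rw [map_pow, map_neg, map_one]
      have e2 : (C (q : ℂ)) ^ (w - m) = C ((q : ℂ) ^ (w - m)) := by rw [← C_pow]
      have e3 : (w.choose m : ℂ[X]) = C ((w.choose m : ℂ)) := by
        rw [← C_eq_natCast]
      rw [e1, e2, e3, C_mul, C_mul]
      ring
    rw [h1, coeff_C_mul, coeff_X_add_C_pow]
  rw [finset_sum_coeff, Finset.sum_congr rfl hterm]
  -- reflect the sum: j = w - m
  rw [← Finset.sum_range_reflect]
  -- now the summand at j is the term with m = w - j
  have hL : ∀ j ∈ Finset.range (w + 1),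
      (-1 : ℂ) ^ ((w + 1 - 1 - j) + w) * (q : ℂ) ^ (w - (w + 1 - 1 - j))
          * (w.choose (w + 1 - 1 - j) : ℂ)
          * (((q : ℂ) - 1) ^ ((n - w + (w + 1 - 1 - j)) - (n - i))
            * ((n - w + (w + 1 - 1 - j)).choose (n - i) : ℂ))
      = (-1 : ℂ) ^ j * ((q : ℂ) - 1) ^ ((n - j) - (n - i)) * (q : ℂ) ^ j
          * ((n - j).choose (n - i) : ℂ) * (w.choose j : ℂ) := by
    intro j hj
    rw [Finset.mem_range] at hj
    have hjw : j ≤ w := by omega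
    have e0 : w + 1 - 1 - j = w - j := by omega
    rw [e0]
    have e1 : (w - j) + w = 2 * (w - j) + j := by omega
    have e2 : w - (w - j) = j := by omega
    have e3 : n - w + (w - j) = n - j := by omega
    have e4 : w.choose (w - j) = w.choose j := Nat.choose_symm hjw
    rw [e1, e2, e3, e4, pow_add, pow_mul]
    ring_nf
  rw [Finset.sum_congr rfl hL]
  -- compare with kraw
  have hR : ((kraw n q i (w : ℝ) : ℝ) : ℂ)
      = ∑ j ∈ Finset.range (i + 1),
          (-1 : ℂ) ^ j * ((q : ℂ) - 1) ^ (i - j) * (q : ℂ) ^ j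
            * ((n - j).choose (n - i) : ℂ) * (w.choose j : ℂ) := by
    rw [kraw]
    push_cast
    refine Finset.sum_congr rfl fun j hj => ?_
    rw [show ((realChoose (w : ℝ) j : ℝ) : ℂ) = ((w.choose j : ℝ) : ℂ) by
      rw [realChoose_nat_s7]]
    push_cast
    ring
  rw [hR]
  -- both sums equal the common sum over range (n+1)
  have hLext : ∑ j ∈ Finset.range (w + 1),
      (-1 : ℂ) ^ j * ((q : ℂ) - 1) ^ ((n - j) - (n - i)) * (q : ℂ) ^ j
        * ((n - j).choose (n - i) : ℂ) * (w.choose j : ℂ)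
      = ∑ j ∈ Finset.range (n + 1),
      (-1 : ℂ) ^ j * ((q : ℂ) - 1) ^ ((n - j) - (n - i)) * (q : ℂ) ^ j
        * ((n - j).choose (n - i) : ℂ) * (w.choose j : ℂ) := by
    apply Finset.sum_subset
    · intro j hj; rw [Finset.mem_range] at *; omega
    · intro j hj hj2
      rw [Finset.mem_range] at *
      rw [Nat.choose_eq_zero_of_lt (show w < j by omega)]
      simp
  have hRext : ∑ j ∈ Finset.range (i + 1),
      (-1 : ℂ) ^ j * ((q : ℂ) - 1) ^ (i - j) * (q : ℂ) ^ j
        * ((n - j).choose (n - i) : ℂ) * (w.choose j : ℂ)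
      = ∑ j ∈ Finset.range (n + 1),
      (-1 : ℂ) ^ j * ((q : ℂ) - 1) ^ (i - j) * (q : ℂ) ^ j
        * ((n - j).choose (n - i) : ℂ) * (w.choose j : ℂ) := by
    apply Finset.sum_subset
    · intro j hj; rw [Finset.mem_range] at *; omega
    · intro j hj hj2
      rw [Finset.mem_range] at *
      rw [Nat.choose_eq_zero_of_lt (show n - j < n - i by omega)]
      simp
  rw [hLext, hRext]
  refine Finset.sum_congr rfl fun j hj => ?_
  rw [Finset.mem_range] at hj
  rcases le_or_gt j i with h | h
  · rw [show (n - j) - (n - i) = i - j by omega]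
  · rw [Nat.choose_eq_zero_of_lt (show n - j < n - i by omega)]
    simp

open Polynomial in
lemma char_sum (n q : ℕ) (hq : 2 ≤ q) (i : ℕ) (hi : i ≤ n) (u : Fin n → ℂ)
    (hu : ∀ k, u k ^ q = 1) :
    ∑ v ∈ Finset.univ.filter
        (fun v : Fin n → Fin q => (Finset.univ.filter fun k => (v k).val ≠ 0).card = i),
        ∏ k, u k ^ (v k).val
      = ((kraw n q i (((Finset.univ.filter fun k => u k ≠ 1).card : ℕ) : ℝ) : ℝ) : ℂ) := by
  have hq0 : q ≠ 0 := by omega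
  have hNZ : NeZero q := ⟨hq0⟩
  set D := (Finset.univ.filter fun k => u k ≠ 1).card with hD
  have hDn : D ≤ n := le_trans (Finset.card_filter_le _ _) (by simp)
  set g : Fin n → ℂ := fun k => ∑ a ∈ ({0}ᶜ : Finset (Fin q)), u k ^ (a : Fin q).val with hg
  have hgval : ∀ k, g k = if u k = 1 then (q : ℂ) - 1 else -1 := by
    intro k
    have hsplit : (∑ a ∈ ({0} : Finset (Fin q)), u k ^ (a : Fin q).val) + g k
        = ∑ a : Fin q, u k ^ a.val := Finset.sum_add_sum_compl {0} _
    have hzero : (∑ a ∈ ({0} : Finset (Fin q)), u k ^ (a : Fin q).val) = 1 := by simp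
    have hgk : g k = (∑ a : Fin q, u k ^ a.val) - 1 := by
      rw [← hsplit, hzero]; ring
    have huniv : ∑ a : Fin q, u k ^ a.val = ∑ m ∈ Finset.range q, u k ^ m :=
      Fin.sum_univ_eq_sum_range _ _
    by_cases h1 : u k = 1
    · have hs : ∑ a : Fin q, u k ^ a.val = (q : ℂ) := by simp [h1]
      rw [hgk, hs, if_pos h1]
    · have hs : ∑ a : Fin q, u k ^ a.val = 0 := by
        rw [huniv, geom_sum_eq h1, hu k, sub_self, zero_div]
      rw [hgk, hs, if_neg h1]
      ring
  have step1 : ∑ v ∈ Finset.univ.filter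
        (fun v : Fin n → Fin q => (Finset.univ.filter fun k => (v k).val ≠ 0).card = i),
        ∏ k, u k ^ (v k).val
      = ∑ S ∈ Finset.powersetCard i (Finset.univ : Finset (Fin n)), ∏ k ∈ S, g k := by
    rw [← Finset.sum_fiberwise_of_maps_to
      (g := fun v : Fin n → Fin q => Finset.univ.filter fun k => (v k).val ≠ 0)
      (t := Finset.powersetCard i (Finset.univ : Finset (Fin n)))
      (fun v hv => by
        rw [Finset.mem_powersetCard_univ]
        exact (Finset.mem_filter.mp hv).2)]
    refine Finset.sum_congr rfl fun S hS => ?_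
    rw [Finset.mem_powersetCard_univ] at hS
    have hfib : (Finset.univ.filter
          (fun v : Fin n → Fin q => (Finset.univ.filter fun k => (v k).val ≠ 0).card = i)).filter
          (fun v => Finset.univ.filter (fun k => (v k).val ≠ 0) = S)
        = Fintype.piFinset (fun k => if k ∈ S then ({0}ᶜ : Finset (Fin q)) else {0}) := by
      ext v
      simp only [Finset.mem_filter, Finset.mem_univ, true_and, Fintype.mem_piFinset]
      constructor
      · rintro ⟨-, hv⟩ k
        by_cases hk : k ∈ S
        · rw [if_pos hk]
          rw [← hv] at hk
          simp only [Finset.mem_filter, Finset.mem_univ, true_and] at hk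
          simp only [Finset.mem_compl, Finset.mem_singleton]
          intro h0
          exact hk (by rw [h0, Fin.val_zero])
        · rw [if_neg hk]
          rw [← hv] at hk
          simp only [Finset.mem_filter, Finset.mem_univ, true_and] at hk
          have : (v k).val = 0 := not_not.mp hk
          rw [Finset.mem_singleton]
          exact Fin.ext (by rw [this, Fin.val_zero])
      · intro h
        have hset : Finset.univ.filter (fun k => (v k).val ≠ 0) = S := by
          ext k
          simp only [Finset.mem_filter, Finset.mem_univ, true_and]
          constructor
          · intro hvk
            by_contra hk
            have := h k
            rw [if_neg hk, Finset.mem_singleton] at this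
            exact hvk (by rw [this, Fin.val_zero])
          · intro hk
            have := h k
            rw [if_pos hk, Finset.mem_compl, Finset.mem_singleton] at this
            intro h0
            exact this (Fin.ext (by rw [h0, Fin.val_zero]))
        exact ⟨by rw [hset, hS], hset⟩
    rw [hfib, ← Finset.prod_univ_sum
      (fun k => if k ∈ S then ({0}ᶜ : Finset (Fin q)) else {0})
      (fun k a => u k ^ (a : Fin q).val)]
    have hpt : ∀ k : Fin n, (∑ a ∈ (if k ∈ S then ({0}ᶜ : Finset (Fin q)) else {0}),
        u k ^ (a : Fin q).val) = if k ∈ S then g k else 1 := by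
      intro k
      by_cases hk : k ∈ S
      · rw [if_pos hk, if_pos hk]
      · rw [if_neg hk, if_neg hk]
        simp
    rw [Finset.prod_congr rfl fun k _ => hpt k, Finset.prod_ite_mem, Finset.univ_inter]
  have step2 : ∑ S ∈ Finset.powersetCard i (Finset.univ : Finset (Fin n)), ∏ k ∈ S, g k
      = (∏ k, (X + C (g k))).coeff (n - i) := by
    rw [Finset.prod_X_add_C_coeff (Finset.univ : Finset (Fin n)) g
      (show n - i ≤ (Finset.univ : Finset (Fin n)).card by simp)]
    congr 2
    rw [Finset.card_univ, Fintype.card_fin, Nat.sub_sub_self hi]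
  have step3 : (∏ k, (X + C (g k)))
      = (X + C ((q : ℂ) - 1)) ^ (n - D) * (X + C (-1 : ℂ)) ^ D := by
    have h1 : ∀ k : Fin n, (X + C (g k))
        = if u k = 1 then X + C ((q : ℂ) - 1) else X + C (-1 : ℂ) := by
      intro k
      rw [hgval k]
      split <;> rfl
    rw [Finset.prod_congr rfl fun k _ => h1 k, Finset.prod_ite, Finset.prod_const,
      Finset.prod_const]
    have hc2 : (Finset.univ.filter fun k : Fin n => ¬ (u k = 1)).card = D := hD.symm
    have hc1 : (Finset.univ.filter fun k : Fin n => u k = 1).card = n - D := by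
      have := Finset.card_filter_add_card_filter_not
        (s := (Finset.univ : Finset (Fin n))) (p := fun k => u k = 1)
      rw [Finset.card_univ, Fintype.card_fin] at this
      omega
    rw [hc1, hc2]
  rw [step1, step2, step3, kraw_coeff n q i D hi hDn]

lemma kraw_sum_nonneg (n q : ℕ) (hq : 2 ≤ q) (i : ℕ) (hi : i ≤ n)
    (C : Finset (Fin n → Fin q)) :
    0 ≤ ∑ x ∈ C, ∑ y ∈ C, kraw n q i ((hammingDist x y : ℕ) : ℝ) := by
  have hq0 : q ≠ 0 := by omega
  set ζ : ℂ := Complex.exp (2 * Real.pi * Complex.I / q) with hζdef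
  have hζ : IsPrimitiveRoot ζ q := Complex.isPrimitiveRoot_exp q hq0
  have hζq : ζ ^ q = 1 := hζ.pow_eq_one
  have hζnorm : ‖ζ‖ = 1 := Complex.norm_eq_one_of_pow_eq_one hζq hq0
  have hζne : ζ ≠ 0 := Complex.exp_ne_zero _
  have hconj : (starRingEnd ℂ) ζ = ζ⁻¹ := (Complex.inv_eq_conj hζnorm).symm
  set χ : (Fin n → Fin q) → (Fin n → Fin q) → ℂ :=
    fun v z => ∏ k, ζ ^ ((v k).val * (z k).val) with hχ
  set V : Finset (Fin n → Fin q) := Finset.univ.filter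
    (fun v : Fin n → Fin q => (Finset.univ.filter fun k => (v k).val ≠ 0).card = i) with hV
  have pair : ∀ x y : Fin n → Fin q,
      ((kraw n q i ((hammingDist x y : ℕ) : ℝ) : ℝ) : ℂ)
        = ∑ v ∈ V, χ v x * (starRingEnd ℂ) (χ v y) := by
    intro x y
    set u : Fin n → ℂ := fun k => ζ ^ ((x k).val) * (ζ⁻¹) ^ ((y k).val) with hu
    have hh : ∀ (m a b : ℕ), ζ ^ (m * a) * (starRingEnd ℂ) (ζ ^ (m * b))
        = (ζ ^ a * ζ⁻¹ ^ b) ^ m := by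
      intro m a b
      calc ζ ^ (m * a) * (starRingEnd ℂ) (ζ ^ (m * b))
          = ζ ^ (m * a) * (ζ ^ (m * b))⁻¹ := by rw [map_pow, hconj, inv_pow]
        _ = (ζ ^ a) ^ m * ((ζ ^ b) ^ m)⁻¹ := by rw [pow_mul', pow_mul']
        _ = (ζ ^ a) ^ m * ((ζ ^ b)⁻¹) ^ m := by rw [inv_pow]
        _ = (ζ ^ a * (ζ ^ b)⁻¹) ^ m := (mul_pow _ _ _).symm
        _ = (ζ ^ a * ζ⁻¹ ^ b) ^ m := by rw [inv_pow]
    have hupow : ∀ k, u k ^ q = 1 := by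
      intro k
      rw [hu]
      simp only
      rw [← hh q ((x k).val) ((y k).val), pow_mul, hζq, one_pow, pow_mul, hζq, one_pow,
        map_one, mul_one]
    have huone : ∀ k, (u k = 1 ↔ x k = y k) := by
      intro k
      rw [hu]
      simp only
      rw [inv_pow, ← div_eq_mul_inv, div_eq_one_iff_eq (pow_ne_zero _ hζne)]
      constructor
      · intro h
        exact Fin.ext (hζ.pow_inj (x k).isLt (y k).isLt h)
      · intro h
        rw [h]
    have hham : (Finset.univ.filter fun k => u k ≠ 1).card = hammingDist x y := by
      rw [hammingDist]
      congr 1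
      apply Finset.filter_congr
      intro k _
      simp only [ne_eq, huone k]
    have hcs := char_sum n q hq i hi u hupow
    rw [hham] at hcs
    rw [← hcs]
    refine Finset.sum_congr rfl fun v _ => ?_
    rw [hχ]
    simp only
    rw [map_prod, ← Finset.prod_mul_distrib]
    refine Finset.prod_congr rfl fun k _ => ?_
    rw [hu]
    simp only
    exact (hh ((v k).val) ((x k).val) ((y k).val)).symm
  have key : ((∑ x ∈ C, ∑ y ∈ C, kraw n q i ((hammingDist x y : ℕ) : ℝ) : ℝ) : ℂ)
      = ((∑ v ∈ V, Complex.normSq (∑ x ∈ C, χ v x) : ℝ) : ℂ) := by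
    push_cast
    rw [Finset.sum_congr rfl fun x _ => Finset.sum_congr rfl fun y _ => pair x y]
    rw [show ∑ x ∈ C, ∑ y ∈ C, ∑ v ∈ V, χ v x * (starRingEnd ℂ) (χ v y)
        = ∑ v ∈ V, ∑ x ∈ C, ∑ y ∈ C, χ v x * (starRingEnd ℂ) (χ v y) by
      rw [Finset.sum_congr rfl fun x (_ : x ∈ C) =>
        Finset.sum_comm (s := C) (t := V) (f := fun y v => χ v x * (starRingEnd ℂ) (χ v y))]
      exact Finset.sum_comm]
    refine Finset.sum_congr rfl fun v _ => ?_
    rw [← Complex.mul_conj, map_sum, Finset.sum_mul_sum]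
  have hre : ∑ x ∈ C, ∑ y ∈ C, kraw n q i ((hammingDist x y : ℕ) : ℝ)
      = ∑ v ∈ V, Complex.normSq (∑ x ∈ C, χ v x) :=
    Complex.ofReal_injective key
  rw [hre]
  exact Finset.sum_nonneg fun v _ => Complex.normSq_nonneg _

theorem LP_bound_for_codes (n q d : ℕ) (hn : 1 ≤ n) (hq : 2 ≤ q)
    (hd1 : 1 ≤ d) (hdn : d ≤ n)
    (f : ℝ → ℝ) (c : ℕ → ℝ)
    (hf : ∀ z : ℝ, f z = ∑ i ∈ Finset.range (n + 1), c i * kraw n q i z)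
    (hA1a : 0 < c 0) (hA1b : ∀ i : ℕ, 1 ≤ i → i ≤ n → 0 ≤ c i)
    (hA2a : 0 < f 0) (hA2b : ∀ i : ℕ, d ≤ i → i ≤ n → f i ≤ 0)
    (C : Finset (Fin n → Fin q))
    (hdist : ∀ x ∈ C, ∀ y ∈ C, x ≠ y → d ≤ hammingDist x y) :
    (C.card : ℝ) ≤ f 0 / c 0 := by
  rcases Nat.eq_zero_or_pos C.card with hC | hC
  · rw [hC]
    push_cast
    positivity
  have hN : (0 : ℝ) < (C.card : ℝ) := by exact_mod_cast hC
  set S : ℝ := ∑ x ∈ C, ∑ y ∈ C, f ((hammingDist x y : ℕ) : ℝ) with hS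
  -- upper bound
  have upper : S ≤ (C.card : ℝ) * f 0 := by
    have hrow : ∀ x ∈ C, ∑ y ∈ C, f ((hammingDist x y : ℕ) : ℝ) ≤ f 0 := by
      intro x hx
      have hle : ∀ y ∈ C, f ((hammingDist x y : ℕ) : ℝ) ≤ (if y = x then f 0 else 0) := by
        intro y hy
        by_cases h : y = x
        · subst h
          rw [if_pos rfl, hammingDist_self]
          push_cast
          exact le_refl _
        · rw [if_neg h]
          have hxy : x ≠ y := fun he => h he.symm
          have hd := hdist x hx y hy hxy
          have hdn' : hammingDist x y ≤ n := by
            have := hammingDist_le_card_fintype (x := x) (y := y)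
            simpa using this
          exact hA2b (hammingDist x y) hd hdn'
      calc ∑ y ∈ C, f ((hammingDist x y : ℕ) : ℝ)
          ≤ ∑ y ∈ C, (if y = x then f 0 else 0) := Finset.sum_le_sum hle
        _ = f 0 := by rw [Finset.sum_ite_eq' C x (fun _ => f 0), if_pos hx]
    calc S ≤ ∑ _x ∈ C, f 0 := Finset.sum_le_sum hrow
      _ = (C.card : ℝ) * f 0 := by rw [Finset.sum_const, nsmul_eq_mul]
  -- lower bound
  have hSf : S = ∑ i ∈ Finset.range (n + 1),
      c i * (∑ x ∈ C, ∑ y ∈ C, kraw n q i ((hammingDist x y : ℕ) : ℝ)) := by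
    rw [hS]
    rw [Finset.sum_congr rfl fun x (_ : x ∈ C) => Finset.sum_congr rfl fun y (_ : y ∈ C) =>
      hf ((hammingDist x y : ℕ) : ℝ)]
    rw [show ∑ x ∈ C, ∑ y ∈ C, ∑ i ∈ Finset.range (n + 1),
          c i * kraw n q i ((hammingDist x y : ℕ) : ℝ)
        = ∑ i ∈ Finset.range (n + 1), ∑ x ∈ C, ∑ y ∈ C,
          c i * kraw n q i ((hammingDist x y : ℕ) : ℝ) by
      rw [Finset.sum_congr rfl fun x (_ : x ∈ C) =>
        Finset.sum_comm (s := C) (t := Finset.range (n + 1))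
          (f := fun y i => c i * kraw n q i ((hammingDist x y : ℕ) : ℝ))]
      exact Finset.sum_comm]
    refine Finset.sum_congr rfl fun i _ => ?_
    rw [Finset.mul_sum]
    exact Finset.sum_congr rfl fun x _ => by rw [Finset.mul_sum]
  have hlow : c 0 * ((C.card : ℝ) * (C.card : ℝ)) ≤ S := by
    rw [hSf]
    have h0mem : 0 ∈ Finset.range (n + 1) := Finset.mem_range.mpr (by omega)
    have h0 : ∑ x ∈ C, ∑ y ∈ C, kraw n q 0 ((hammingDist x y : ℕ) : ℝ)
        = (C.card : ℝ) * (C.card : ℝ) := by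
      rw [Finset.sum_congr rfl fun x (_ : x ∈ C) => Finset.sum_congr rfl fun y (_ : y ∈ C) =>
        kraw_zero n q ((hammingDist x y : ℕ) : ℝ)]
      rw [Finset.sum_congr rfl fun x (_ : x ∈ C) => Finset.sum_const (1 : ℝ)]
      simp [mul_comm]
    have := Finset.single_le_sum (f := fun i => c i *
        (∑ x ∈ C, ∑ y ∈ C, kraw n q i ((hammingDist x y : ℕ) : ℝ)))
      (fun i hi => by
        rw [Finset.mem_range] at hi
        have hci : 0 ≤ c i := by
          rcases Nat.eq_zero_or_pos i with h | h
          · exact h ▸ hA1a.le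
          · exact hA1b i h (by omega)
        exact mul_nonneg hci (kraw_sum_nonneg n q hq i (by omega) C)) h0mem
    exact le_trans (le_of_eq (congrArg (c 0 * ·) h0.symm)) this
  -- combine
  have hmain : c 0 * ((C.card : ℝ) * (C.card : ℝ)) ≤ (C.card : ℝ) * f 0 :=
    le_trans hlow upper
  rw [le_div_iff₀ hA1a]
  nlinarith [hN]
end

section
/- Duality of LP polynomials: a real polynomial f of degree at most n satisfies conditions (A1): f_0 > 0 and f_i ≥ 0 for i=1,...,n, and (A2): f(0) > 0 and f(i) ≤ 0 for i=d,...,n, if and only if its dual polynomial f̂ satisfies (B1): f̂_0 > 0 and f̂_i ≤ 0 for i = d,...,n, and (B2): f̂(0) > 0 and f̂(i) ≥ 0 for i = 1,...,n. Moreover (f(0)/f_0)·(f̂(0)/f̂_0) = q^n. -/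
open Finset

namespace LPDual

open Polynomial

lemma realChoose_nat (m j : ℕ) : realChoose (m : ℝ) j = (m.choose j : ℝ) := by
  have h : ∏ k ∈ Finset.range j, ((m : ℝ) - k) = (m.descFactorial j : ℝ) := by
    induction j with
    | zero => simp
    | succ j ih =>
      rw [Finset.prod_range_succ, ih, Nat.descFactorial_succ, Nat.cast_mul]
      rcases le_or_gt j m with h' | h'
      · rw [Nat.cast_sub h']; ring
      · rw [Nat.descFactorial_eq_zero_iff_lt.mpr h', Nat.sub_eq_zero_of_le h'.le]
        push_cast; ring
  rw [realChoose, h, Nat.descFactorial_eq_factorial_mul_choose]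
  push_cast
  rw [mul_comm, mul_div_assoc, div_self (by exact_mod_cast j.factorial_ne_zero), mul_one]

lemma coeff_one_add_pow (a : ℝ) (N r : ℕ) :
    (((1 : ℝ[X]) + C a * X) ^ N).coeff r = a ^ r * (N.choose r : ℝ) := by
  rw [add_comm, add_pow, Polynomial.finset_sum_coeff]
  have : ∀ t ∈ Finset.range (N + 1),
      ((C a * X) ^ t * (1 : ℝ[X]) ^ (N - t) * (N.choose t : ℝ[X])).coeff r
      = if r = t then a ^ t * (N.choose t : ℝ) else 0 := by
    intro t ht
    rw [show (C a * X) ^ t * (1 : ℝ[X]) ^ (N - t) * (N.choose t : ℝ[X])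
        = C (a ^ t * (N.choose t : ℝ)) * X ^ t by
      rw [← Polynomial.C_eq_natCast, mul_pow, ← C_pow, C_mul]; ring,
      Polynomial.coeff_C_mul_X_pow]
  rw [Finset.sum_congr rfl this, Finset.sum_ite_eq (Finset.range (N + 1))]
  split_ifs with h
  · rfl
  · rw [Nat.choose_eq_zero_of_lt (by simpa using h), Nat.cast_zero, mul_zero]

lemma coeff_Q (n q m i : ℕ) (hm : m ≤ n) (hi : i ≤ n) :
    (((1 : ℝ[X]) - X) ^ m * ((1 : ℝ[X]) + C ((q : ℝ) - 1) * X) ^ (n - m)).coeff i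
      = kraw n q i m := by
  set B : ℝ[X] := (1 : ℝ[X]) + C ((q : ℝ) - 1) * X with hB
  have h1 : ((1 : ℝ[X]) - X) = (C (-(q : ℝ)) * X) + B := by
    rw [hB, C_neg, C_sub, C_1]; ring
  rw [h1, add_pow, Finset.sum_mul, Polynomial.finset_sum_coeff]
  have key : ∀ t ∈ Finset.range (m + 1),
      ((C (-(q : ℝ)) * X) ^ t * B ^ (m - t) * (m.choose t : ℝ[X]) * B ^ (n - m)).coeff i
      = if t ≤ i then
          (-(q : ℝ)) ^ t * (m.choose t : ℝ) * (((q : ℝ) - 1) ^ (i - t) * ((n - t).choose (i - t) : ℝ))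
        else 0 := by
    intro t ht
    have hmt : m - t + (n - m) = n - t := by
      simp only [Finset.mem_range] at ht; omega
    have h2 : (C (-(q : ℝ)) * X) ^ t * B ^ (m - t) * (m.choose t : ℝ[X]) * B ^ (n - m)
        = (C ((-(q : ℝ)) ^ t * (m.choose t : ℝ)) * B ^ (n - t)) * X ^ t := by
      rw [← hmt, pow_add, mul_pow, ← C_pow, ← Polynomial.C_eq_natCast, C_mul]; ring
    rw [h2, Polynomial.coeff_mul_X_pow']
    split_ifs with h
    · rw [Polynomial.coeff_C_mul, hB, coeff_one_add_pow]
    · rfl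
  rw [Finset.sum_congr rfl key]
  have hsub1 : Finset.range (m + 1) ⊆ Finset.range (n + 1) := by
    intro x hx; simp only [Finset.mem_range] at *; omega
  have hsub2 : Finset.range (i + 1) ⊆ Finset.range (n + 1) := by
    intro x hx; simp only [Finset.mem_range] at *; omega
  set g : ℕ → ℝ := fun t =>
    (-1 : ℝ) ^ t * ((q : ℝ) - 1) ^ (i - t) * (q : ℝ) ^ t *
      ((n - t).choose (n - i) : ℝ) * (m.choose t : ℝ) with hg
  have lhs_eq : (∑ t ∈ Finset.range (m + 1),
      if t ≤ i then
        (-(q : ℝ)) ^ t * (m.choose t : ℝ) * (((q : ℝ) - 1) ^ (i - t) * ((n - t).choose (i - t) : ℝ))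
      else 0) = ∑ t ∈ Finset.range (n + 1), g t := by
    rw [← Finset.sum_subset hsub1 (fun x _ hx => by
      simp only [Finset.mem_range, not_lt] at hx
      simp only [hg]
      rw [Nat.choose_eq_zero_of_lt (by omega : m < x), Nat.cast_zero, mul_zero])]
    refine Finset.sum_congr rfl (fun t ht => ?_)
    simp only [Finset.mem_range] at ht
    split_ifs with h
    · have hsymm : (n - t).choose (i - t) = (n - t).choose (n - i) := by
        rw [← Nat.choose_symm (by omega : n - i ≤ n - t)]
        congr 1; omega
      rw [hsymm, hg, neg_pow]
      ring
    · have : (n - t).choose (n - i) = 0 := Nat.choose_eq_zero_of_lt (by omega)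
      simp [hg, this]
  rw [lhs_eq, kraw]
  rw [Finset.sum_subset hsub2 (fun x hx hx2 => by
    simp only [Finset.mem_range, not_lt] at hx hx2
    rw [Nat.choose_eq_zero_of_lt (by omega : n - x < n - i), Nat.cast_zero, mul_zero, zero_mul])]
  exact Finset.sum_congr rfl (fun t _ => by rw [realChoose_nat, hg])

lemma sum_Q_eq (n q j : ℕ) (hj : j ≤ n) :
    ∑ k ∈ Finset.range (n + 1),
      C ((((1 : ℝ[X]) - X) ^ j * ((1 : ℝ[X]) + C ((q : ℝ) - 1) * X) ^ (n - j)).coeff k) *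
        (((1 : ℝ[X]) - X) ^ k * ((1 : ℝ[X]) + C ((q : ℝ) - 1) * X) ^ (n - k))
      = C ((q : ℝ) ^ n) * X ^ j := by
  set B : ℝ[X] := (1 : ℝ[X]) + C ((q : ℝ) - 1) * X with hB
  set Qj : ℝ[X] := ((1 : ℝ[X]) - X) ^ j * B ^ (n - j) with hQj
  have hdeg : Qj.natDegree < n + 1 := by
    have h1 : ((1 : ℝ[X]) - X).natDegree ≤ 1 := by compute_degree
    have h2 : B.natDegree ≤ 1 := by rw [hB]; compute_degree
    calc Qj.natDegree ≤ (((1:ℝ[X]) - X) ^ j).natDegree + (B ^ (n-j)).natDegree :=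
          natDegree_mul_le
      _ ≤ j * 1 + (n - j) * 1 := by
          gcongr <;> exact (natDegree_pow_le).trans (by gcongr)
      _ < n + 1 := by omega
  set φ : ℝ[X] →+* RatFunc ℝ := (algebraMap ℝ[X] (RatFunc ℝ)) with hφ
  apply RatFunc.algebraMap_injective ℝ
  have hBne : B ≠ 0 := fun h => by
    have := congrArg (Polynomial.eval 0) h
    simp [hB] at this
  have hbne : φ B ≠ 0 := fun h => hBne (RatFunc.algebraMap_injective ℝ (by rw [h, map_zero]))
  set e : ℝ →+* RatFunc ℝ := (algebraMap ℝ (RatFunc ℝ)) with he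
  have hφC : ∀ r : ℝ, φ (C r) = e r := fun r => by
    rw [he, hφ, IsScalarTower.algebraMap_apply ℝ ℝ[X] (RatFunc ℝ), Polynomial.algebraMap_eq]
  set x : RatFunc ℝ := φ X with hx
  set a : RatFunc ℝ := φ ((1 : ℝ[X]) - X) with ha
  set b : RatFunc ℝ := φ B with hb
  set u : RatFunc ℝ := a / b with hu
  have step1 : φ (∑ k ∈ Finset.range (n + 1),
      C (Qj.coeff k) * (((1 : ℝ[X]) - X) ^ k * B ^ (n - k)))
      = (∑ k ∈ Finset.range (n + 1), e (Qj.coeff k) * u ^ k) * b ^ n := by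
    rw [map_sum, Finset.sum_mul]
    refine Finset.sum_congr rfl (fun k hk => ?_)
    simp only [Finset.mem_range] at hk
    rw [map_mul, map_mul, map_pow, map_pow, hφC, ← ha, ← hb, hu, div_pow, mul_assoc]
    congr 1
    rw [div_mul_eq_mul_div, eq_div_iff (pow_ne_zero _ hbne), mul_assoc, ← pow_add]
    congr 2
    omega
  have step2 : (∑ k ∈ Finset.range (n + 1), e (Qj.coeff k) * u ^ k)
      = (1 - u) ^ j * (1 + e ((q : ℝ) - 1) * u) ^ (n - j) := by
    rw [← Polynomial.eval₂_eq_sum_range' e hdeg u, hQj, hB]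
    simp only [eval₂_mul, eval₂_pow, eval₂_sub, eval₂_add, eval₂_one, eval₂_X, eval₂_mul,
      eval₂_C]
  have hba : b - a = e (q : ℝ) * x := by
    simp only [hb, ha, hB, map_add, map_mul, map_sub, map_one, hφC, ← hx]
    ring
  have hqa : b + e ((q : ℝ) - 1) * a = e (q : ℝ) := by
    simp only [hb, ha, hB, map_add, map_mul, map_sub, map_one, hφC, ← hx]
    ring
  have h1u : 1 - u = e (q : ℝ) * x / b := by
    rw [hu, ← hba]; field_simp
  have h2u : 1 + e ((q : ℝ) - 1) * u = e (q : ℝ) / b := by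
    rw [hu, ← hqa]; field_simp
  rw [step1, step2, h1u, h2u]
  simp only [map_mul, map_pow, hφC, ← hx]
  rw [div_pow, div_pow, div_mul_div_comm, ← pow_add,
    show j + (n - j) = n from by omega, div_mul_eq_mul_div,
    mul_div_assoc, div_self (pow_ne_zero _ hbne), mul_one, mul_pow,
    mul_assoc, mul_comm (x ^ j), ← mul_assoc, ← pow_add,
    show j + (n - j) = n from by omega]
  rw [← hφ, hφC, ← hx]

lemma kraw_orth (n q i j : ℕ) (hi : i ≤ n) (hj : j ≤ n) :
    ∑ k ∈ Finset.range (n + 1), kraw n q i (k : ℝ) * kraw n q k (j : ℝ)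
      = (q : ℝ) ^ n * (if i = j then 1 else 0) := by
  have h := congrArg (fun p : ℝ[X] => p.coeff i) (sum_Q_eq n q j hj)
  rw [Polynomial.finset_sum_coeff] at h
  have h2 : ∀ k ∈ Finset.range (n + 1),
      (C ((((1 : ℝ[X]) - X) ^ j * ((1 : ℝ[X]) + C ((q : ℝ) - 1) * X) ^ (n - j)).coeff k) *
        (((1 : ℝ[X]) - X) ^ k * ((1 : ℝ[X]) + C ((q : ℝ) - 1) * X) ^ (n - k))).coeff i
      = kraw n q i (k : ℝ) * kraw n q k (j : ℝ) := by
    intro k hk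
    simp only [Finset.mem_range] at hk
    rw [Polynomial.coeff_C_mul, coeff_Q n q j k hj (by omega), coeff_Q n q k i (by omega) hi]
    ring
  rw [Finset.sum_congr rfl h2] at h
  rw [h, Polynomial.coeff_C_mul, Polynomial.coeff_X_pow]

end LPDual

theorem LP_duality (n q d : ℕ) (hn : 1 ≤ n) (hq : 2 ≤ q) (hd1 : 1 ≤ d) (hdn : d ≤ n)
    (f : ℝ → ℝ) (c : ℕ → ℝ)
    (hf : ∀ z : ℝ, f z = ∑ i ∈ Finset.range (n + 1), c i * kraw n q i z)
    -- the dual polynomial `f̂(z) = q^{-n/2} ∑_{j=0}^n f(j) K_j^{(n,q)}(z)`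
    (fhat : ℝ → ℝ) (chat : ℕ → ℝ)
    (hfhat : ∀ z : ℝ, fhat z =
      (Real.sqrt ((q : ℝ) ^ n))⁻¹ * ∑ j ∈ Finset.range (n + 1), f j * kraw n q j z)
    -- the Krawtchouk expansion coefficients of the dual polynomial
    (hchat : ∀ j : ℕ, j ≤ n → chat j = (Real.sqrt ((q : ℝ) ^ n))⁻¹ * f j) :
    (((0 < c 0 ∧ ∀ i : ℕ, 1 ≤ i → i ≤ n → 0 ≤ c i) ∧
        (0 < f 0 ∧ ∀ i : ℕ, d ≤ i → i ≤ n → f i ≤ 0)) ↔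
      ((0 < chat 0 ∧ ∀ i : ℕ, d ≤ i → i ≤ n → chat i ≤ 0) ∧
        (0 < fhat 0 ∧ ∀ i : ℕ, 1 ≤ i → i ≤ n → 0 ≤ fhat i))) ∧
    (((0 < c 0 ∧ ∀ i : ℕ, 1 ≤ i → i ≤ n → 0 ≤ c i) ∧
        (0 < f 0 ∧ ∀ i : ℕ, d ≤ i → i ≤ n → f i ≤ 0)) →
      (f 0 / c 0) * (fhat 0 / chat 0) = (q : ℝ) ^ n) := by
  have hqn : (0 : ℝ) < (q : ℝ) ^ n := by positivity
  set s : ℝ := Real.sqrt ((q : ℝ) ^ n) with hs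
  have hspos : 0 < s := Real.sqrt_pos.mpr hqn
  have hss : s * s = (q : ℝ) ^ n := Real.mul_self_sqrt hqn.le
  -- the key duality: fhat(i) = s * c i for i ≤ n
  have key : ∀ i : ℕ, i ≤ n → fhat (i : ℝ) = s * c i := by
    intro i hi
    rw [hfhat (i : ℝ)]
    have hsum : ∑ j ∈ Finset.range (n + 1), f (j : ℝ) * kraw n q j (i : ℝ)
        = (q : ℝ) ^ n * c i := by
      have swap : ∑ j ∈ Finset.range (n + 1), f (j : ℝ) * kraw n q j (i : ℝ)
          = ∑ m ∈ Finset.range (n + 1), c m *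
              (∑ j ∈ Finset.range (n + 1), kraw n q m (j : ℝ) * kraw n q j (i : ℝ)) := by
        simp_rw [hf, Finset.sum_mul, Finset.mul_sum]
        rw [Finset.sum_comm]
        exact Finset.sum_congr rfl fun m _ => Finset.sum_congr rfl fun j _ => by ring
      rw [swap]
      have : ∀ m ∈ Finset.range (n + 1),
          c m * (∑ j ∈ Finset.range (n + 1), kraw n q m (j : ℝ) * kraw n q j (i : ℝ))
          = if m = i then (q : ℝ) ^ n * c m else 0 := by
        intro m hm
        simp only [Finset.mem_range] at hm
        rw [LPDual.kraw_orth n q m i (by omega) hi]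
        split_ifs with h <;> ring
      rw [Finset.sum_congr rfl this, Finset.sum_ite_eq' (Finset.range (n + 1))]
      simp [Nat.lt_succ_of_le hi]
    rw [hsum, ← hss]
    field_simp
  have key0 : fhat 0 = s * c 0 := by
    have := key 0 (by omega)
    simpa using this
  have chat0 : chat 0 = s⁻¹ * f 0 := by
    have := hchat 0 (by omega)
    simpa using this
  have hsinv : 0 < s⁻¹ := by positivity
  constructor
  · constructor
    · rintro ⟨⟨hc0, hc⟩, hf0, hfn⟩
      refine ⟨⟨?_, ?_⟩, ?_, ?_⟩
      · rw [chat0]; exact mul_pos hsinv hf0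
      · intro i hdi hin
        rw [hchat i hin]
        have := hfn i hdi hin
        nlinarith
      · rw [key0]; exact mul_pos hspos hc0
      · intro i h1i hin
        rw [key i hin]
        have := hc i h1i hin
        nlinarith
    · rintro ⟨⟨hch0, hch⟩, hfh0, hfh⟩
      refine ⟨⟨?_, ?_⟩, ?_, ?_⟩
      · rw [key0] at hfh0
        exact (mul_pos_iff_of_pos_left hspos).mp hfh0
      · intro i h1i hin
        have := hfh i h1i hin
        rw [key i hin] at this
        exact (mul_nonneg_iff_of_pos_left hspos).mp this
      · rw [chat0] at hch0
        exact (mul_pos_iff_of_pos_left hsinv).mp hch0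
      · intro i hdi hin
        have := hch i hdi hin
        rw [hchat i hin] at this
        nlinarith
  · rintro ⟨⟨hc0, hc⟩, hf0, hfn⟩
    rw [key0, chat0]
    field_simp
    rw [← hss]; ring
end

section
/- Plotkin Bound: if C ⊆ F_q^n is a code with minimum distance d satisfying qd > (q-1)n, then |C| ≤ qd / (qd - (q-1)n). -/
open Finset

theorem plotkin_bound (n q d : ℕ) (hn : 1 ≤ n) (hq : 2 ≤ q)
    (C : Finset (Fin n → Fin q)) (hC : 2 ≤ C.card)
    -- `d` is the minimum distance of `C`
    (hd_le : ∀ x ∈ C, ∀ y ∈ C, x ≠ y → d ≤ hammingDist x y)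
    (hd_ex : ∃ x ∈ C, ∃ y ∈ C, x ≠ y ∧ hammingDist x y = d)
    (hplotkin : (q - 1) * n < q * d) :
    (C.card : ℝ) ≤ ((q : ℝ) * d) / ((q : ℝ) * d - ((q : ℝ) - 1) * n) := by
  set M := C.card with hM
  -- Step A: lower bound the total sum of distances
  have hA : M * (M - 1) * d ≤ ∑ p ∈ C ×ˢ C, hammingDist p.1 p.2 := by
    have hsub : C.offDiag ⊆ C ×ˢ C := by
      intro p hp
      rw [mem_offDiag] at hp
      exact mem_product.mpr ⟨hp.1, hp.2.1⟩
    calc M * (M - 1) * d = C.offDiag.card * d := by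
          rw [offDiag_card, Nat.mul_sub_one, hM]
      _ ≤ ∑ p ∈ C.offDiag, hammingDist p.1 p.2 := by
          rw [← smul_eq_mul, ← Finset.sum_const]
          apply Finset.sum_le_sum
          intro p hp
          rw [mem_offDiag] at hp
          exact hd_le p.1 hp.1 p.2 hp.2.1 hp.2.2
      _ ≤ ∑ p ∈ C ×ˢ C, hammingDist p.1 p.2 :=
          Finset.sum_le_sum_of_subset hsub
  -- Step B: per-coordinate upper bound
  have hB : ∀ i : Fin n, q * ((C ×ˢ C).filter fun p => p.1 i ≠ p.2 i).card ≤ (q - 1) * (M * M) := by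
    intro i
    set m : Fin q → ℕ := fun a => (C.filter fun x => x i = a).card with hm
    have hsum : ∑ a, m a = M := by
      rw [hM]
      exact (Finset.card_eq_sum_card_fiberwise (fun x _ => mem_univ (x i))).symm
    have heq : ((C ×ˢ C).filter fun p => p.1 i = p.2 i).card = ∑ a, m a * m a := by
      have h1 : ((C ×ˢ C).filter fun p => p.1 i = p.2 i).card = ∑ x ∈ C, m (x i) := by
        rw [Finset.card_filter, Finset.sum_product]
        apply Finset.sum_congr rfl
        intro x hx
        rw [hm]
        simp only [Finset.card_filter]
        apply Finset.sum_congr rfl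
        intro y hy
        simp [eq_comm]
      rw [h1, ← Finset.sum_fiberwise_of_maps_to (g := fun x => x i)
        (fun x (_ : x ∈ C) => mem_univ (x i)) (fun x => m (x i))]
      apply Finset.sum_congr rfl
      intro a _
      have h2 : ∀ x ∈ C.filter (fun x => x i = a), m (x i) = m a := by
        intro x hx
        rw [(Finset.mem_filter.mp hx).2]
      rw [Finset.sum_congr rfl h2, Finset.sum_const, smul_eq_mul, hm]
    have hcs : M * M ≤ q * ∑ a, m a * m a := by
      have h1 := sq_sum_le_card_mul_sum_sq (s := (univ : Finset (Fin q)))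
        (f := fun a => (m a : ℝ))
      have h2 : ((M : ℝ)) * M ≤ (q : ℝ) * ∑ a, (m a : ℝ) * (m a : ℝ) := by
        have h3 : ((∑ a, m a : ℕ) : ℝ) = ∑ a, (m a : ℝ) := by push_cast; ring
        rw [← hsum]
        simp only [card_univ, Fintype.card_fin] at h1
        calc ((∑ a, m a : ℕ) : ℝ) * ((∑ a, m a : ℕ) : ℝ)
            = (∑ a, (m a : ℝ)) ^ 2 := by rw [h3]; ring
          _ ≤ (q : ℝ) * ∑ a, (m a : ℝ) ^ 2 := h1
          _ = (q : ℝ) * ∑ a, (m a : ℝ) * (m a : ℝ) := by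
              congr 1; apply Finset.sum_congr rfl; intros; ring
      exact_mod_cast h2
    have hsplit : ((C ×ˢ C).filter fun p => p.1 i = p.2 i).card
        + ((C ×ˢ C).filter fun p => p.1 i ≠ p.2 i).card = M * M := by
      have h := Finset.card_filter_add_card_filter_not
        (s := C ×ˢ C) (p := fun p => p.1 i = p.2 i)
      simp only [ne_eq, card_product, ← hM] at h ⊢
      omega
    have hstep : q * ((C ×ˢ C).filter fun p => p.1 i ≠ p.2 i).card + M * M ≤ q * (M * M) := by
      calc q * ((C ×ˢ C).filter fun p => p.1 i ≠ p.2 i).card + M * M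
          ≤ q * ((C ×ˢ C).filter fun p => p.1 i ≠ p.2 i).card
            + q * ((C ×ˢ C).filter fun p => p.1 i = p.2 i).card := by
            have : M * M ≤ q * ((C ×ˢ C).filter fun p => p.1 i = p.2 i).card := by
              rw [heq]; exact hcs
            omega
        _ = q * (M * M) := by rw [← Nat.mul_add, Nat.add_comm, hsplit]
    rw [Nat.sub_one_mul]
    omega
  -- Step C: total sum as sum over coordinates
  have hC2 : ∑ p ∈ C ×ˢ C, hammingDist p.1 p.2
      = ∑ i : Fin n, ((C ×ˢ C).filter fun p => p.1 i ≠ p.2 i).card := by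
    simp only [hammingDist, Finset.card_filter]
    rw [Finset.sum_comm]
  -- key nat inequality
  have key : q * (M * (M - 1) * d) ≤ (q - 1) * n * (M * M) := by
    calc q * (M * (M - 1) * d) ≤ q * ∑ p ∈ C ×ˢ C, hammingDist p.1 p.2 :=
          Nat.mul_le_mul_left q hA
      _ = ∑ i : Fin n, q * ((C ×ˢ C).filter fun p => p.1 i ≠ p.2 i).card := by
          rw [hC2, Finset.mul_sum]
      _ ≤ ∑ i : Fin n, (q - 1) * (M * M) := Finset.sum_le_sum fun i _ => hB i
      _ = (q - 1) * n * (M * M) := by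
          rw [Finset.sum_const, card_univ, Fintype.card_fin, smul_eq_mul]; ring
  -- Step D: real arithmetic
  have hq1 : (1 : ℕ) ≤ q := by omega
  have hM1 : (1 : ℕ) ≤ M := by omega
  have keyR : (q : ℝ) * ((M : ℝ) * ((M : ℝ) - 1) * d) ≤ ((q : ℝ) - 1) * n * ((M : ℝ) * M) := by
    have := (Nat.cast_le (α := ℝ)).mpr key
    push_cast [Nat.cast_sub hq1, Nat.cast_sub hM1] at this
    convert this using 2 <;> push_cast <;> ring
  have hpos : (0 : ℝ) < (q : ℝ) * d - ((q : ℝ) - 1) * n := by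
    have := (Nat.cast_lt (α := ℝ)).mpr hplotkin
    push_cast [Nat.cast_sub hq1] at this
    linarith
  rw [le_div_iff₀ hpos]
  have hM0 : (0 : ℝ) < M := by positivity
  have hM2 : (2 : ℝ) ≤ M := by exact_mod_cast hC
  nlinarith [keyR, hpos, hM0, hM2, mul_pos hM0 hpos]
end

section
/- Rao Bound: any code C ⊆ F_q^n that is an orthogonal array of strength τ = 2k (equivalently, has dual distance d' ≥ 2k+1) satisfies |C| ≥ Σ_{i=0}^{k} C(n,i)(q-1)^i. -/
open Finset

set_option linter.unusedSectionVars false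

namespace RaoAux

open Complex

lemma prod_range_sub_cast (d : ℕ) : ∀ j : ℕ, j ≤ d →
    ∏ k ∈ Finset.range j, ((d : ℝ) - k) = (d.descFactorial j : ℝ) := by
  intro j
  induction j with
  | zero => simp
  | succ j ih =>
    intro h
    rw [Finset.prod_range_succ, ih (by omega), Nat.descFactorial_succ, Nat.cast_mul,
      Nat.cast_sub (by omega)]
    ring

lemma realChoose_natCast (d j : ℕ) : realChoose (d : ℝ) j = (d.choose j : ℝ) := by
  rcases le_or_gt j d with h | h
  · rw [realChoose, prod_range_sub_cast d j h, Nat.descFactorial_eq_factorial_mul_choose,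
      Nat.cast_mul, mul_comm, mul_div_assoc, div_self (by exact_mod_cast j.factorial_ne_zero),
      mul_one]
  · rw [realChoose, Finset.prod_eq_zero (Finset.mem_range.2 h) (by simp),
      Nat.choose_eq_zero_of_lt h]
    simp

variable {q : ℕ} [NeZero q]

noncomputable def ch (q : ℕ) [NeZero q] : AddChar (ZMod q) ℂ := ZMod.stdAddChar

lemma ch_conj (a : ZMod q) : (starRingEnd ℂ) (ch q a) = ch q (-a) := by
  have h : (0:ℕ) < ringChar (ZMod q) := by
    rw [ZMod.ringChar_zmod_n]; exact Nat.pos_of_ne_zero (NeZero.ne q)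
  rw [ch, AddChar.starComp_apply h, AddChar.inv_apply]

lemma ch_sum_mul (a : ZMod q) : ∑ c : ZMod q, ch q (c * a) = if a = 0 then (q:ℂ) else 0 := by
  rw [ch, AddChar.sum_mulShift a (ZMod.isPrimitive_stdAddChar q)]
  simp [ZMod.card]

lemma ch_map_sum {ι : Type*} (s : Finset ι) (f : ι → ZMod q) :
    ch q (∑ t ∈ s, f t) = ∏ t ∈ s, ch q (f t) := by
  classical
  induction s using Finset.cons_induction with
  | empty => simp
  | cons a s ha ih => rw [Finset.sum_cons, Finset.prod_cons, AddChar.map_add_eq_mul, ih]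


lemma hammingNorm_eq {n : ℕ} (u : Fin n → ZMod q) :
    hammingNorm u = (univ.filter (fun t => u t ≠ 0)).card := rfl

lemma sum_weight_eq {M : Type*} [AddCommMonoid M] (n i : ℕ) (F : (Fin n → ZMod q) → M) :
    ∑ u ∈ univ.filter (fun u : Fin n → ZMod q => hammingNorm u = i), F u
      = ∑ s ∈ powersetCard i (univ : Finset (Fin n)),
          ∑ u ∈ Fintype.piFinset
              (fun t => if t ∈ s then (univ.erase (0 : ZMod q)) else {0}), F u := by
  classical
  rw [← Finset.sum_fiberwise_of_maps_to
    (g := fun u : Fin n → ZMod q => univ.filter (fun t => u t ≠ 0))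
    (t := powersetCard i (univ : Finset (Fin n)))
    (fun u hu => by
      rw [mem_powersetCard]
      exact ⟨subset_univ _, by rw [← hammingNorm_eq]; exact (mem_filter.1 hu).2⟩) F]
  apply sum_congr rfl
  intro s hs
  have hscard : s.card = i := (mem_powersetCard.1 hs).2
  apply sum_congr _ (fun _ _ => rfl)
  ext u
  simp only [mem_filter, mem_univ, true_and, Fintype.mem_piFinset]
  constructor
  · rintro ⟨hw, hsupp⟩ t
    by_cases ht : t ∈ s
    · have : t ∈ univ.filter (fun t => u t ≠ 0) := hsupp ▸ ht
      simp only [mem_filter, mem_univ, true_and] at this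
      simp [ht, this]
    · have : t ∉ univ.filter (fun t => u t ≠ 0) := hsupp ▸ ht
      simp only [mem_filter, mem_univ, true_and, not_not] at this
      simp [ht, this]
  · intro h
    have hsupp : univ.filter (fun t => u t ≠ 0) = s := by
      ext t
      have := h t
      by_cases ht : t ∈ s
      · rw [if_pos ht] at this
        simp only [mem_erase, mem_univ, and_true] at this
        simp [ht, this]
      · rw [if_neg ht] at this
        simp only [mem_singleton] at this
        simp [ht, this]
    exact ⟨by rw [hammingNorm_eq, hsupp, hscard], hsupp⟩

lemma card_supersets {n : ℕ} (i : ℕ) (r : Finset (Fin n)) (hr : r.card ≤ i) :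
    ((powersetCard i (univ : Finset (Fin n))).filter (fun s => r ⊆ s)).card
      = (n - r.card).choose (i - r.card) := by
  classical
  have hcompl : ((univ : Finset (Fin n)) \ r).card = n - r.card := by
    rw [← Finset.compl_eq_univ_sdiff, Finset.card_compl, Fintype.card_fin]
  rw [← hcompl, ← Finset.card_powersetCard (i - r.card) ((univ : Finset (Fin n)) \ r)]
  apply Finset.card_bij' (fun s _ => s \ r) (fun t _ => t ∪ r)
  · intro s hs
    simp only [mem_filter, mem_powersetCard] at hs
    rw [mem_powersetCard]
    exact ⟨sdiff_subset_sdiff (subset_univ _) le_rfl,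
      by rw [card_sdiff_of_subset hs.2, hs.1.2]⟩
  · intro t ht
    rw [mem_powersetCard] at ht
    have hdisj : Disjoint t r :=
      Finset.disjoint_left.2 fun a hat har => (Finset.mem_sdiff.1 (ht.1 hat)).2 har
    simp only [mem_filter, mem_powersetCard]
    refine ⟨⟨subset_univ _, ?_⟩, subset_union_right⟩
    rw [card_union_of_disjoint hdisj, ht.2]
    omega
  · intro s hs
    simp only [mem_filter] at hs
    exact sdiff_union_of_subset hs.2
  · intro t ht
    rw [mem_powersetCard] at ht
    have hdisj : Disjoint t r :=
      Finset.disjoint_left.2 fun a hat har => (Finset.mem_sdiff.1 (ht.1 hat)).2 har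
    rw [union_sdiff_cancel_right hdisj]

lemma card_weight_eq (n i : ℕ) :
    (univ.filter (fun u : Fin n → ZMod q => hammingNorm u = i)).card
      = n.choose i * (q-1)^i := by
  classical
  rw [Finset.card_eq_sum_ones, sum_weight_eq n i (fun _ => 1)]
  have h1 : ∀ s ∈ powersetCard i (univ : Finset (Fin n)),
      (∑ u ∈ Fintype.piFinset
        (fun t => if t ∈ s then (univ.erase (0 : ZMod q)) else {0}), (1:ℕ)) = (q-1)^i := by
    intro s hs
    have hscard : s.card = i := (mem_powersetCard.1 hs).2
    rw [← Finset.card_eq_sum_ones, Fintype.card_piFinset]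
    have h2 : ∀ t : Fin n, (if t ∈ s then (univ.erase (0 : ZMod q)) else {0}).card
        = if t ∈ s then q - 1 else 1 := by
      intro t
      by_cases ht : t ∈ s <;> simp [ht, Finset.card_erase_of_mem, ZMod.card]
    rw [Finset.prod_congr rfl (fun t _ => h2 t), Finset.prod_ite, Finset.prod_const,
      Finset.prod_const, one_pow, mul_one]
    congr 1
    rw [Finset.filter_mem_eq_inter, Finset.univ_inter, hscard]
  rw [Finset.sum_congr rfl h1, Finset.sum_const, Finset.card_powersetCard, Finset.card_univ,
    Fintype.card_fin, smul_eq_mul]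

lemma sum_char_weight (n i : ℕ) (hi : i ≤ n) (z : Fin n → ZMod q) :
    ∑ u ∈ univ.filter (fun u : Fin n → ZMod q => hammingNorm u = i), ch q (∑ t, u t * z t)
      = ((kraw n q i (hammingNorm z) : ℝ) : ℂ) := by
  classical
  set Z : Finset (Fin n) := univ.filter (fun t => z t ≠ 0) with hZdef
  have hdZ : hammingNorm z = Z.card := rfl
  set d := Z.card with hd
  have hdn : d ≤ n := by
    rw [hd]
    calc Z.card ≤ (univ : Finset (Fin n)).card := card_le_card (subset_univ _)
    _ = n := by rw [card_univ, Fintype.card_fin]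
  set cnt : Finset (Fin n) → ℕ :=
    fun r => ((powersetCard i (univ : Finset (Fin n))).filter (fun s => r ⊆ s)).card with hcnt
  have hcnt_le : ∀ r : Finset (Fin n), r.card ≤ i → cnt r = (n - r.card).choose (i - r.card) :=
    fun r hr => card_supersets i r hr
  have hcnt_gt : ∀ r : Finset (Fin n), i < r.card → cnt r = 0 := by
    intro r hr
    rw [hcnt]
    rw [Finset.card_eq_zero, Finset.filter_eq_empty_iff]
    intro s hs hrs
    have := card_le_card hrs
    rw [(mem_powersetCard.1 hs).2] at this
    omega
  calc ∑ u ∈ univ.filter (fun u : Fin n → ZMod q => hammingNorm u = i), ch q (∑ t, u t * z t)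
      = ∑ s ∈ powersetCard i (univ : Finset (Fin n)),
          ∑ u ∈ Fintype.piFinset
            (fun t => if t ∈ s then (univ.erase (0 : ZMod q)) else {0}),
            ∏ t, ch q (u t * z t) := by
        rw [Finset.sum_congr rfl fun u _ => ch_map_sum univ (fun t => u t * z t),
          sum_weight_eq n i]
    _ = ∑ s ∈ powersetCard i (univ : Finset (Fin n)),
          ∏ t ∈ s, ((if z t = 0 then (q:ℂ) else 0) - 1) := by
        apply Finset.sum_congr rfl
        intro s hs
        have hps := Finset.prod_univ_sum
          (fun t => if t ∈ s then (univ.erase (0 : ZMod q)) else {0})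
          (fun t c => ch q (c * z t))
        rw [← hps]
        have h3 : ∀ t : Fin n,
            (∑ c ∈ (if t ∈ s then (univ.erase (0 : ZMod q)) else {0}), ch q (c * z t))
            = if t ∈ s then ((if z t = 0 then (q:ℂ) else 0) - 1) else 1 := by
          intro t
          by_cases ht : t ∈ s
          · rw [if_pos ht, if_pos ht, Finset.sum_erase_eq_sub (mem_univ 0), ch_sum_mul,
              zero_mul, AddChar.map_zero_eq_one]
          · rw [if_neg ht, if_neg ht, Finset.sum_singleton, zero_mul, AddChar.map_zero_eq_one]
        rw [Finset.prod_congr rfl (fun t _ => h3 t), Finset.prod_ite, Finset.prod_const_one,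
          mul_one, Finset.filter_mem_eq_inter, Finset.univ_inter]
    _ = ∑ s ∈ powersetCard i (univ : Finset (Fin n)), ∑ r ∈ s.powerset,
          (if r ⊆ Z then (-(q:ℂ))^r.card else 0) * ((q:ℂ)-1)^(i - r.card) := by
        apply Finset.sum_congr rfl
        intro s hs
        have hscard : s.card = i := (mem_powersetCard.1 hs).2
        have hterm : ∀ t ∈ s, ((if z t = 0 then (q:ℂ) else 0) - 1)
            = ((if t ∈ Z then -(q:ℂ) else 0) + ((q:ℂ)-1)) := by
          intro t _
          by_cases h : z t = 0 <;> simp [hZdef, h] <;> ring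
        rw [Finset.prod_congr rfl hterm, Finset.prod_add]
        apply Finset.sum_congr rfl
        intro r hr
        have hrs := Finset.mem_powerset.1 hr
        congr 1
        · by_cases h : r ⊆ Z
          · rw [if_pos h, Finset.prod_congr rfl (fun t ht => if_pos (h ht)),
              Finset.prod_const]
          · rw [if_neg h]
            obtain ⟨t, htr, htZ⟩ := Finset.not_subset.1 h
            exact Finset.prod_eq_zero htr (if_neg htZ)
        · rw [Finset.prod_const, Finset.card_sdiff_of_subset hrs, hscard]
    _ = ∑ r : Finset (Fin n), (cnt r : ℂ) *
          ((if r ⊆ Z then (-(q:ℂ))^r.card else 0) * ((q:ℂ)-1)^(i - r.card)) := by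
        have h1 : ∀ s ∈ powersetCard i (univ : Finset (Fin n)),
            (∑ r ∈ s.powerset,
              (if r ⊆ Z then (-(q:ℂ))^r.card else 0) * ((q:ℂ)-1)^(i - r.card))
            = ∑ r : Finset (Fin n), (if r ⊆ s then
              (if r ⊆ Z then (-(q:ℂ))^r.card else 0) * ((q:ℂ)-1)^(i - r.card) else 0) := by
          intro s _
          rw [show s.powerset = univ.filter (fun r => r ⊆ s) by ext r; simp,
            Finset.sum_filter]
        rw [Finset.sum_congr rfl h1, Finset.sum_comm]
        apply Finset.sum_congr rfl
        intro r _
        rw [← Finset.sum_filter, Finset.sum_const, hcnt, nsmul_eq_mul]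
    _ = ∑ r ∈ Z.powerset, (cnt r : ℂ) * ((-(q:ℂ))^r.card * ((q:ℂ)-1)^(i - r.card)) := by
        rw [show Z.powerset = univ.filter (fun r => r ⊆ Z) by ext r; simp, Finset.sum_filter]
        apply Finset.sum_congr rfl
        intro r _
        by_cases h : r ⊆ Z <;> simp [h]
    _ = ∑ j ∈ Finset.range (d+1), ∑ r ∈ Finset.powersetCard j Z,
          (cnt r : ℂ) * ((-(q:ℂ))^r.card * ((q:ℂ)-1)^(i - r.card)) := by
        rw [← Finset.sum_fiberwise_of_maps_to (g := Finset.card)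
          (t := Finset.range (d+1))
          (fun r hr => Finset.mem_range.2 (by
            have := Finset.card_le_card (Finset.mem_powerset.1 hr); omega))]
        apply Finset.sum_congr rfl
        intro j hj
        apply Finset.sum_congr _ (fun _ _ => rfl)
        rw [Finset.powersetCard_eq_filter]
    _ = ∑ j ∈ Finset.range (d+1), (d.choose j : ℂ) *
          ((if j ≤ i then ((n-j).choose (i-j) : ℂ) else 0) *
            ((-(q:ℂ))^j * ((q:ℂ)-1)^(i - j))) := by
        apply Finset.sum_congr rfl
        intro j hj
        have h4 : ∀ r ∈ Finset.powersetCard j Z,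
            (cnt r : ℂ) * ((-(q:ℂ))^r.card * ((q:ℂ)-1)^(i - r.card))
            = (if j ≤ i then ((n-j).choose (i-j) : ℂ) else 0) *
              ((-(q:ℂ))^j * ((q:ℂ)-1)^(i - j)) := by
          intro r hr
          have hrcard' : r.card = j := (Finset.mem_powersetCard.1 hr).2
          rcases le_or_gt j i with h | h
          · rw [if_pos h, hrcard', hcnt_le r (by omega), hrcard']
          · rw [hrcard', if_neg (by omega : ¬ j ≤ i), hcnt_gt r (by omega)]
            simp
        rw [Finset.sum_congr rfl h4, Finset.sum_const, Finset.card_powersetCard,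
          nsmul_eq_mul]
    _ = ((kraw n q i (hammingNorm z) : ℝ) : ℂ) := by
        rw [hdZ]
        have hkraw : ((kraw n q i (d : ℝ) : ℝ) : ℂ)
            = ∑ j ∈ Finset.range (i+1), (-1:ℂ)^j * ((q:ℂ)-1)^(i-j) * (q:ℂ)^j *
              (((n-j).choose (n-i) : ℕ) : ℂ) * ((d.choose j : ℕ) : ℂ) := by
          rw [kraw, Complex.ofReal_sum]
          apply Finset.sum_congr rfl
          intro j _
          rw [realChoose_natCast]
          push_cast
          ring
        rw [hkraw]
        have hL : ∀ j ∈ Finset.range (n+1), j ∉ Finset.range (d+1) →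
            ((d.choose j : ℕ) : ℂ) *
            ((if j ≤ i then ((n-j).choose (i-j) : ℂ) else 0) *
              ((-(q:ℂ))^j * ((q:ℂ)-1)^(i - j))) = 0 := by
          intro j _ hj
          rw [Finset.mem_range, not_lt] at hj
          rw [Nat.choose_eq_zero_of_lt (by omega)]
          simp
        have hR : ∀ j ∈ Finset.range (n+1), j ∉ Finset.range (i+1) →
            (-1:ℂ)^j * ((q:ℂ)-1)^(i-j) * (q:ℂ)^j *
              (((n-j).choose (n-i) : ℕ) : ℂ) * ((d.choose j : ℕ) : ℂ) = 0 := by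
          intro j hj' hj
          rw [Finset.mem_range, not_lt] at hj
          rw [Finset.mem_range] at hj'
          rw [Nat.choose_eq_zero_of_lt (by omega)]
          simp
        rw [Finset.sum_subset (Finset.range_subset_range.2 (by omega : d+1 ≤ n+1)) hL,
          Finset.sum_subset (Finset.range_subset_range.2 (by omega : i+1 ≤ n+1)) hR]
        apply Finset.sum_congr rfl
        intro j hj
        rw [Finset.mem_range] at hj
        rcases le_or_gt j i with h | h
        · rw [if_pos h]
          have hcheq : (n-j).choose (i-j) = (n-j).choose (n-i) := by
            rw [show n - i = (n-j) - (i-j) by omega, Nat.choose_symm (by omega)]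
          rw [hcheq, neg_pow]
          ring
        · rw [if_neg (by omega : ¬ j ≤ i), Nat.choose_eq_zero_of_lt (by omega : n - j < n - i)]
          simp

end RaoAux

open RaoAux Complex in
theorem rao_bound (n q k : ℕ) (hn : 1 ≤ n) (hq : 2 ≤ q) (hk : 2 * k ≤ n)
    (C : Finset (Fin n → Fin q)) (hC : C.Nonempty)
    -- `C` is an orthogonal array of strength `2k`: dual distance at least `2k+1`
    (hdesign : ∀ i : ℕ, 1 ≤ i → i ≤ 2 * k → dualDistDistrib C i = 0) :
    (∑ i ∈ Finset.range (k + 1), (n.choose i : ℝ) * ((q : ℝ) - 1) ^ i) ≤ (C.card : ℝ) := by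
  classical
  haveI : NeZero q := ⟨by omega⟩
  set toZ : Fin q → ZMod q := fun a => ((a : ℕ) : ZMod q) with htoZ
  have htoZinj : Function.Injective toZ := by
    intro a b hab
    have h2 : ((a : ℕ) : ZMod q).val = ((b : ℕ) : ZMod q).val := congrArg ZMod.val hab
    rw [ZMod.val_cast_of_lt a.isLt, ZMod.val_cast_of_lt b.isLt] at h2
    exact Fin.ext h2
  have hcardC : (0:ℝ) < (C.card : ℝ) := by
    have := Finset.card_pos.2 hC
    exact_mod_cast this
  set S : (Fin n → ZMod q) → ℂ := fun u => ∑ x ∈ C, ch q (∑ t, u t * toZ (x t)) with hS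
  have hwt : ∀ x y : Fin n → Fin q,
      hammingNorm (fun t => toZ (x t) - toZ (y t)) = hammingDist x y := by
    intro x y
    rw [hammingNorm_eq]
    rw [show hammingDist x y = (univ.filter (fun t => x t ≠ y t)).card from rfl]
    congr 1
    apply Finset.filter_congr
    intro t _
    simp only [ne_eq, sub_eq_zero]
    exact not_congr htoZinj.eq_iff
  -- Step A: Fourier coefficients vanish for weights 1..2k
  have hSvanish : ∀ u : Fin n → ZMod q, 1 ≤ hammingNorm u → hammingNorm u ≤ 2*k → S u = 0 := by
    intro u h1 h2
    set i := hammingNorm u with hidef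
    have hin : i ≤ n := by omega
    have hdd := hdesign i h1 h2
    rw [dualDistDistrib, div_eq_zero_iff] at hdd
    have hnum : ∑ j ∈ Finset.range (n + 1), distDistrib C j * kraw n q i j = 0 := by
      rcases hdd with h | h
      · exact h
      · exact absurd h (ne_of_gt hcardC)
    have hpairs : ∑ p ∈ C ×ˢ C, kraw n q i (hammingDist p.1 p.2) = 0 := by
      rw [← Finset.sum_fiberwise_of_maps_to
        (g := fun p : (Fin n → Fin q) × (Fin n → Fin q) => hammingDist p.1 p.2)
        (t := Finset.range (n+1))
        (fun p _ => Finset.mem_range.2 (by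
          show hammingDist p.1 p.2 < n + 1
          have := hammingDist_le_card_fintype (x := p.1) (y := p.2)
          rw [Fintype.card_fin] at this; omega))
        (f := fun p => kraw n q i (hammingDist p.1 p.2))]
      have hj : ∀ j ∈ Finset.range (n+1),
          (∑ p ∈ (C ×ˢ C).filter (fun p => hammingDist p.1 p.2 = j),
            kraw n q i (hammingDist p.1 p.2))
          = distDistrib C j * kraw n q i j * (C.card : ℝ) := by
        intro j _
        rw [Finset.sum_congr rfl (fun p hp => by rw [(Finset.mem_filter.1 hp).2]),
          Finset.sum_const, distDistrib, nsmul_eq_mul]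
        field_simp
      rw [Finset.sum_congr rfl hj, ← Finset.sum_mul, hnum, zero_mul]
    have hid : ∑ u' ∈ univ.filter (fun u' : Fin n → ZMod q => hammingNorm u' = i),
        S u' * (starRingEnd ℂ) (S u') = 0 := by
      have hterm : ∀ u' : Fin n → ZMod q, S u' * (starRingEnd ℂ) (S u')
          = ∑ x ∈ C, ∑ y ∈ C, ch q (∑ t, u' t * (toZ (x t) - toZ (y t))) := by
        intro u'
        rw [hS, map_sum, Finset.sum_mul_sum]
        apply Finset.sum_congr rfl; intro x _
        apply Finset.sum_congr rfl; intro y _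
        rw [ch_conj, ← AddChar.map_add_eq_mul, ← Finset.sum_neg_distrib,
          ← Finset.sum_add_distrib]
        congr 1
        apply Finset.sum_congr rfl
        intro t _
        ring
      rw [Finset.sum_congr rfl (fun u' _ => hterm u'), Finset.sum_comm]
      have hx : ∀ x ∈ C,
          (∑ u' ∈ univ.filter (fun u' : Fin n → ZMod q => hammingNorm u' = i),
            ∑ y ∈ C, ch q (∑ t, u' t * (toZ (x t) - toZ (y t))))
          = ∑ y ∈ C, ((kraw n q i (hammingDist x y) : ℝ) : ℂ) := by
        intro x _
        rw [Finset.sum_comm]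
        apply Finset.sum_congr rfl
        intro y _
        rw [sum_char_weight n i hin (fun t => toZ (x t) - toZ (y t)), hwt x y]
      rw [Finset.sum_congr rfl hx]
      have : ∑ x ∈ C, ∑ y ∈ C, ((kraw n q i (hammingDist x y) : ℝ) : ℂ)
          = (((∑ p ∈ C ×ˢ C, kraw n q i (hammingDist p.1 p.2)) : ℝ) : ℂ) := by
        rw [Complex.ofReal_sum, Finset.sum_product]
      rw [this, hpairs, Complex.ofReal_zero]
    have hnormsq : ∀ u' ∈ univ.filter (fun u' : Fin n → ZMod q => hammingNorm u' = i),
        Complex.normSq (S u') = 0 := by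
      have hre : ∑ u' ∈ univ.filter (fun u' : Fin n → ZMod q => hammingNorm u' = i),
          Complex.normSq (S u') = 0 := by
        have := hid
        rw [Finset.sum_congr rfl (fun u' _ => Complex.mul_conj (S u')),
          ← Complex.ofReal_sum] at this
        exact_mod_cast this
      exact fun u' hu' =>
        (Finset.sum_eq_zero_iff_of_nonneg (fun _ _ => Complex.normSq_nonneg _)).1 hre u' hu'
    have := hnormsq u (Finset.mem_filter.2 ⟨Finset.mem_univ _, rfl⟩)
    exact Complex.normSq_eq_zero.1 this
  -- Step B: orthogonality of low-weight characters on C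
  have horth : ∀ u v : Fin n → ZMod q, hammingNorm u ≤ k → hammingNorm v ≤ k →
      ∑ x ∈ C, ch q (∑ t, u t * toZ (x t)) * (starRingEnd ℂ) (ch q (∑ t, v t * toZ (x t)))
      = if u = v then (C.card : ℂ) else 0 := by
    intro u v hu hv
    have hterm : ∀ x ∈ C,
        ch q (∑ t, u t * toZ (x t)) * (starRingEnd ℂ) (ch q (∑ t, v t * toZ (x t)))
        = ch q (∑ t, (u - v) t * toZ (x t)) := by
      intro x _
      rw [ch_conj, ← AddChar.map_add_eq_mul, ← Finset.sum_neg_distrib,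
        ← Finset.sum_add_distrib]
      congr 1
      apply Finset.sum_congr rfl
      intro t _
      simp only [Pi.sub_apply]
      ring
    rw [Finset.sum_congr rfl hterm]
    by_cases huv : u = v
    · rw [if_pos huv, huv]
      have : ∀ x ∈ C, ch q (∑ t, (v - v) t * toZ (x t)) = 1 := by
        intro x _
        simp [AddChar.map_zero_eq_one]
      rw [Finset.sum_congr rfl this, Finset.sum_const, nsmul_eq_mul, mul_one]
    · rw [if_neg huv]
      have h1 : 1 ≤ hammingNorm (u - v) := by
        rw [Nat.one_le_iff_ne_zero]
        simp only [ne_eq, hammingNorm_eq_zero, sub_eq_zero]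
        exact huv
      have h2 : hammingNorm (u - v) ≤ 2*k := by
        calc hammingNorm (u - v) = hammingDist u v := by rw [hammingDist_comm, hammingDist_eq_hammingNorm, neg_add_eq_sub]
          _ ≤ hammingDist u 0 + hammingDist 0 v := hammingDist_triangle u 0 v
          _ = hammingNorm u + hammingNorm v := by
              rw [hammingDist_zero_right, hammingDist_zero_left]
          _ ≤ 2*k := by omega
      exact hSvanish (u - v) h1 h2
  -- Step C: linear independence
  have hli : LinearIndependent ℂ
      (fun (u : {u : Fin n → ZMod q // hammingNorm u ≤ k}) (x : ↥C) =>
        ch q (∑ t, u.1 t * toZ (x.1 t))) := by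
    rw [Fintype.linearIndependent_iff]
    intro g hg v
    set φ : {u : Fin n → ZMod q // hammingNorm u ≤ k} → (↥C → ℂ) :=
      fun u x => ch q (∑ t, u.1 t * toZ (x.1 t)) with hφ
    have key : ∀ u : {u : Fin n → ZMod q // hammingNorm u ≤ k},
        (∑ x : ↥C, φ u x * (starRingEnd ℂ) (φ v x)) = if u = v then (C.card:ℂ) else 0 := by
      intro u
      have h := horth u.1 v.1 u.2 v.2
      rw [← Finset.sum_coe_sort C (fun x => ch q (∑ t, u.1 t * toZ (x t)) *
        (starRingEnd ℂ) (ch q (∑ t, v.1 t * toZ (x t))))] at h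
      rw [hφ]
      simp only at h ⊢
      rw [h]
      by_cases huv : u = v
      · rw [if_pos huv, if_pos (by rw [huv])]
      · rw [if_neg huv, if_neg (fun hh => huv (Subtype.ext hh))]
    have hmain : g v * (C.card : ℂ) = 0 := by
      calc g v * (C.card:ℂ)
          = ∑ u : {u : Fin n → ZMod q // hammingNorm u ≤ k},
              g u * (if u = v then (C.card:ℂ) else 0) := by
            rw [Finset.sum_congr rfl (fun u _ => by rw [mul_ite, mul_zero]),
              Finset.sum_ite_eq' Finset.univ v (fun u => g u * (C.card:ℂ)),
              if_pos (Finset.mem_univ v)]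
        _ = ∑ u, g u * ∑ x : ↥C, φ u x * (starRingEnd ℂ) (φ v x) := by
            exact Finset.sum_congr rfl fun u _ => by rw [key u]
        _ = ∑ u, ∑ x : ↥C, (g u * φ u x) * (starRingEnd ℂ) (φ v x) := by
            apply Finset.sum_congr rfl
            intro u _
            rw [Finset.mul_sum]
            exact Finset.sum_congr rfl fun x _ => by ring
        _ = ∑ x : ↥C, (∑ u, g u * φ u x) * (starRingEnd ℂ) (φ v x) := by
            rw [Finset.sum_comm]
            exact Finset.sum_congr rfl fun x _ => by rw [Finset.sum_mul]
        _ = 0 := by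
            apply Finset.sum_eq_zero
            intro x _
            have : (∑ u, g u • φ u) x = 0 := by rw [hg]; rfl
            rw [Finset.sum_apply] at this
            simp only [Pi.smul_apply, smul_eq_mul] at this
            rw [this, zero_mul]
    rcases mul_eq_zero.1 hmain with h | h
    · exact h
    · exact absurd h (by exact_mod_cast ne_of_gt hcardC)
  have hcard : Fintype.card {u : Fin n → ZMod q // hammingNorm u ≤ k} ≤ C.card := by
    have := hli.fintype_card_le_finrank
    rwa [Module.finrank_fintype_fun_eq_card, Fintype.card_coe] at this
  have hcount : Fintype.card {u : Fin n → ZMod q // hammingNorm u ≤ k}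
      = ∑ i ∈ Finset.range (k+1), n.choose i * (q-1)^i := by
    rw [Fintype.card_subtype]
    have hfib := Finset.sum_card_fiberwise_eq_card_filter
      (univ : Finset (Fin n → ZMod q)) (Finset.range (k+1)) hammingNorm
    rw [show (univ.filter (fun u : Fin n → ZMod q => hammingNorm u ≤ k))
        = univ.filter (fun u : Fin n → ZMod q => hammingNorm u ∈ Finset.range (k+1)) by
      apply Finset.filter_congr; intro u _; simp [Nat.lt_succ_iff], ← hfib]
    exact Finset.sum_congr rfl (fun i _ => card_weight_eq n i)
  have hfinal : (∑ i ∈ Finset.range (k + 1), (n.choose i : ℝ) * ((q:ℝ)-1)^i)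
      = ((∑ i ∈ Finset.range (k+1), n.choose i * (q-1)^i : ℕ) : ℝ) := by
    rw [Nat.cast_sum]
    apply Finset.sum_congr rfl
    intro i _
    push_cast [Nat.cast_sub (by omega : 1 ≤ q)]
    ring
  rw [hfinal]
  rw [← hcount]
  exact_mod_cast hcard
end
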